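/- arXiv:math/9805091 — 11 statements merged into one kernel-verified Lean document; each statement's English description precedes it below -/
import Mathlib

section
/- Let R be a commutative ring, let A_1, …, A_p and B_1, …, B_q be ideals of R, and let a_1, …, a_p ≥ 1 and b_1, …, b_q ≥ 1 be integers. Then ∏_{i=1}^{p} ∏_{j=1}^{q} (A_i + B_j)^{a_i b_j} ⊆ (∏_{i=1}^{p} A_i^{a_i}) + (∏_{j=1}^{q} B_j^{b_j}). (This is the ideal-theoretic content of the lemma asserting that for cycles Z_1, Z_2 on affine spaces, I(Z_1 × Z_2) ⊆ (π_1^* I(Z_1), π_2^* I(Z_2)).) -/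
open Finset

lemma ideal_prod_mono {R : Type*} [CommRing R] {ι : Type*} (s : Finset ι)
    {f g : ι → Ideal R} (h : ∀ i ∈ s, f i ≤ g i) :
    (∏ i ∈ s, f i) ≤ ∏ i ∈ s, g i := by
  classical
  induction s using Finset.induction with
  | empty => simp
  | insert _ _ hx ih =>
    rw [Finset.prod_insert hx, Finset.prod_insert hx]
    exact Ideal.mul_mono (h _ (Finset.mem_insert_self _ _))
      (ih fun i hi => h i (Finset.mem_insert_of_mem hi))

lemma add_pow_le_pow_add_pow {R : Type*} [CommRing R] (I J : Ideal R) (m n : ℕ) :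
    (I + J) ^ (m + n + 1) ≤ I ^ (m + 1) + J ^ (n + 1) := by
  rw [add_pow, Ideal.sum_eq_sup, Ideal.add_eq_sup]
  apply Finset.sup_le
  intro k hk
  by_cases hm : m + 1 ≤ k
  · exact Ideal.mul_le_left.trans (Ideal.mul_le_left.trans
      ((Ideal.pow_le_pow_right hm).trans le_sup_left))
  · refine Ideal.mul_le_left.trans (Ideal.mul_le_right.trans
      ((Ideal.pow_le_pow_right ?_).trans le_sup_right))
    omega

lemma prod_add_left_le {R : Type*} [CommRing R] {ι : Type*} (s : Finset ι)
    (C : Ideal R) (D : ι → Ideal R) :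
    (∏ j ∈ s, (C + D j)) ≤ C + ∏ j ∈ s, D j := by
  classical
  induction s using Finset.induction with
  | empty => simp
  | @insert x t hx ih =>
    rw [Finset.prod_insert hx, Finset.prod_insert hx]
    refine le_trans (Ideal.mul_mono (le_refl (C + D x)) ih) ?_
    simp only [Ideal.add_eq_sup]
    rw [Ideal.sup_mul, Ideal.mul_sup, Ideal.mul_sup]
    exact sup_le (sup_le (Ideal.mul_le_right.trans le_sup_left)
        (Ideal.mul_le_left.trans le_sup_left))
      (sup_le (Ideal.mul_le_right.trans le_sup_left) le_sup_right)

lemma prod_add_right_le {R : Type*} [CommRing R] {ι : Type*} (s : Finset ι)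
    (C : ι → Ideal R) (D : Ideal R) :
    (∏ i ∈ s, (C i + D)) ≤ (∏ i ∈ s, C i) + D := by
  have := prod_add_left_le s D C
  simpa [add_comm] using this

/-- For ideals `A_1, …, A_p`, `B_1, …, B_q` of a commutative ring and integers
`a_i ≥ 1`, `b_j ≥ 1`, one has
`∏_i ∏_j (A_i + B_j)^(a_i b_j) ⊆ (∏_i A_i^(a_i)) + (∏_j B_j^(b_j))`. -/
theorem prod_sum_pow_le {R : Type*} [CommRing R] {p q : ℕ}
    (A : Fin p → Ideal R) (B : Fin q → Ideal R)
    (a : Fin p → ℕ) (b : Fin q → ℕ) (ha : ∀ i, 1 ≤ a i) (hb : ∀ j, 1 ≤ b j) :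
    (∏ i : Fin p, ∏ j : Fin q, (A i + B j) ^ (a i * b j)) ≤
      (∏ i : Fin p, A i ^ a i) + ∏ j : Fin q, B j ^ b j := by
  have key : ∀ i j, (A i + B j) ^ (a i * b j) ≤ A i ^ a i + B j ^ b j := by
    intro i j
    obtain ⟨m, hm⟩ : ∃ m, a i = m + 1 := ⟨a i - 1, by have := ha i; omega⟩
    obtain ⟨n, hn⟩ : ∃ n, b j = n + 1 := ⟨b j - 1, by have := hb j; omega⟩
    have h1 : m + n + 1 ≤ a i * b j := by rw [hm, hn]; nlinarith
    have h2 : (A i + B j) ^ (m + n + 1) ≤ A i ^ a i + B j ^ b j := by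
      rw [hm, hn]; exact add_pow_le_pow_add_pow _ _ _ _
    exact (Ideal.pow_le_pow_right h1).trans h2
  calc (∏ i : Fin p, ∏ j : Fin q, (A i + B j) ^ (a i * b j))
      ≤ ∏ i : Fin p, (A i ^ a i + ∏ j : Fin q, B j ^ b j) := by
        refine ideal_prod_mono _ fun i _ => ?_
        calc ∏ j : Fin q, (A i + B j) ^ (a i * b j)
            ≤ ∏ j : Fin q, (A i ^ a i + B j ^ b j) :=
              ideal_prod_mono _ fun j _ => key i j
          _ ≤ A i ^ a i + ∏ j : Fin q, B j ^ b j := prod_add_left_le _ _ _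
    _ ≤ (∏ i : Fin p, A i ^ a i) + ∏ j : Fin q, B j ^ b j :=
        prod_add_right_le _ _ _
end

section
/- Let R be a commutative ring and I ⊆ R an ideal. Then the set of all elements of R that are integral over I is itself an ideal of R (it contains I, is closed under addition, and is closed under multiplication by arbitrary elements of R). -/
/-- `r` is integral over the ideal `I`: it satisfies an equation
`r^k + c_1 r^(k-1) + ⋯ + c_k = 0` with `c_j ∈ I^j`. -/
def IsIntegralOverIdeal {R : Type*} [CommRing R] (I : Ideal R) (r : R) : Prop :=
  ∃ k : ℕ, 1 ≤ k ∧ ∃ c : ℕ → R, (∀ j ∈ Finset.Icc 1 k, c j ∈ I ^ j) ∧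
    r ^ k + ∑ j ∈ Finset.Icc 1 k, c j * r ^ (k - j) = 0

set_option synthInstance.maxHeartbeats 1000000 in
open Polynomial Finset in
theorem isIntegralOverIdeal_iff {R : Type*} [CommRing R] (I : Ideal R) (r : R) :
    IsIntegralOverIdeal I r ↔ IsIntegral (reesAlgebra I) (monomial 1 r : R[X]) := by
  constructor
  · rintro ⟨k, hk, c, hc, heq⟩
    set d : ℕ → R := fun j => if j ∈ Finset.Icc 1 k then c j else 0 with hd
    have hdmem : ∀ j, d j ∈ I ^ j := by
      intro j
      by_cases h : j ∈ Finset.Icc 1 k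
      · show (if j ∈ Finset.Icc 1 k then c j else 0) ∈ I ^ j
        rw [if_pos h]; exact hc j h
      · show (if j ∈ Finset.Icc 1 k then c j else 0) ∈ I ^ j
        rw [if_neg h]; exact (I ^ j).zero_mem
    have hsum : ∑ j ∈ Finset.Icc 1 k, d j * r ^ (k - j)
        = ∑ j ∈ Finset.Icc 1 k, c j * r ^ (k - j) :=
      Finset.sum_congr rfl fun j hj => by
        show (if j ∈ Finset.Icc 1 k then c j else 0) * _ = _
        rw [if_pos hj]
    refine ⟨X ^ k + ∑ j ∈ Finset.Icc 1 k,
        C (⟨monomial j (d j), reesAlgebra.monomial_mem.2 (hdmem j)⟩ :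
          reesAlgebra I) * X ^ (k - j), ?_, ?_⟩
    · apply monic_X_pow_add
      refine lt_of_le_of_lt (Polynomial.degree_sum_le _ _) ?_
      refine (Finset.sup_lt_iff (WithBot.bot_lt_coe k)).2 fun j hj => ?_
      simp only [Finset.mem_Icc] at hj
      refine lt_of_le_of_lt (Polynomial.degree_C_mul_X_pow_le _ _) ?_
      have hlt : (k - j : ℕ) < k := by omega
      exact Nat.cast_lt.2 hlt
    · rw [← aeval_def, map_add, map_pow, aeval_X, map_sum]
      have hterm : ∀ j ∈ Finset.Icc 1 k,
          (aeval (monomial 1 r : R[X]))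
            (C (⟨monomial j (d j), reesAlgebra.monomial_mem.2 (hdmem j)⟩ : reesAlgebra I)
              * X ^ (k - j))
          = monomial k (d j * r ^ (k - j)) := by
        intro j hj
        simp only [Finset.mem_Icc] at hj
        rw [map_mul, map_pow, aeval_X, aeval_C]
        show (monomial j (d j) : R[X]) * (monomial 1 r) ^ (k - j) = _
        rw [monomial_pow, one_mul, monomial_mul_monomial]
        have h3 : j + (k - j) = k := by omega
        rw [h3]
      rw [Finset.sum_congr rfl hterm, monomial_pow, one_mul]
      have hms : (∑ j ∈ Finset.Icc 1 k, monomial k (d j * r ^ (k - j)) : R[X])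
          = monomial k (∑ j ∈ Finset.Icc 1 k, d j * r ^ (k - j)) :=
        (map_sum (monomial k : R →ₗ[R] R[X]) _ _).symm
      rw [hms, ← map_add, hsum, heq, monomial_zero_right]
  · rintro ⟨p, hp, heq⟩
    rcases Nat.eq_zero_or_pos p.natDegree with h0 | hpos
    · -- p = 1, so 1 = 0 in R[X]; R is trivial
      have : (1 : R[X]) = 0 := by
        have := heq
        rw [Polynomial.eq_one_of_monic_natDegree_zero hp h0] at this
        simpa using this
      have h1 : (1 : R) = 0 := by
        have := congrArg (fun q => Polynomial.coeff q 0) this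
        simpa using this
      exact ⟨1, le_refl 1, fun _ => 0, fun j _ => (I ^ j).zero_mem, by
        have : (r : R) = 0 := by rw [← one_mul r, h1, zero_mul]
        simp [this]⟩
    · set n := p.natDegree with hn
      refine ⟨n, hpos, fun j => ((p.coeff (n - j)) : R[X]).coeff j, fun j _ =>
        mem_reesAlgebra_iff _ _ |>.1 (p.coeff (n - j)).2 j, ?_⟩
      have key : (aeval (monomial 1 r : R[X])) p = 0 := by rw [aeval_def]; exact heq
      rw [Polynomial.aeval_eq_sum_range (x := (monomial 1 r : R[X]))] at key
      -- key : ∑ i in range (n+1), p.coeff i • (monomial 1 r)^i = 0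
      have key2 : ∑ i ∈ Finset.range (n + 1),
          (((p.coeff i) : R[X]) * monomial i (r ^ i)) = 0 := by
        rw [← key]
        refine Finset.sum_congr rfl fun i _ => ?_
        rw [monomial_pow, one_mul, Algebra.smul_def]
        rfl
      have key3 : ∑ i ∈ Finset.range (n + 1),
          ((p.coeff i) : R[X]).coeff (n - i) * r ^ i = 0 := by
        have := congrArg (fun q => Polynomial.coeff q n) key2
        simp only [Polynomial.finset_sum_coeff, Polynomial.coeff_zero] at this
        rw [← this]
        refine Finset.sum_congr rfl fun i hi => ?_
        simp only [Finset.mem_range] at hi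
        have h2 : (n - i) + i = n := by omega
        conv_rhs => rw [← h2]
        rw [Polynomial.coeff_mul_monomial]
      -- split off i = n and reindex
      rw [Finset.sum_range_succ] at key3
      have hlead : ((p.coeff n) : R[X]).coeff (n - n) * r ^ n = r ^ n := by
        have : p.coeff n = 1 := hp.coeff_natDegree
        rw [this]
        simp
      rw [hlead] at key3
      rw [← key3, add_comm (r ^ n)]
      congr 1
      refine Finset.sum_nbij' (fun j => n - j) (fun i => n - i) ?_ ?_ ?_ ?_ ?_
      · intro j hj; simp only [Finset.mem_Icc] at hj; simp only [Finset.mem_range]; omega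
      · intro i hi; simp only [Finset.mem_range] at hi; simp only [Finset.mem_Icc]; omega
      · intro j hj; simp only [Finset.mem_Icc] at hj; omega
      · intro i hi; simp only [Finset.mem_range] at hi; omega
      · intro j hj
        simp only [Finset.mem_Icc] at hj
        have : n - (n - j) = j := by omega
        rw [this]

/-- The set of elements integral over an ideal `I` is itself an ideal:
it contains `I`, is closed under addition, and is closed under multiplication
by arbitrary ring elements. -/
theorem integralClosureIdeal_isIdeal {R : Type*} [CommRing R] (I : Ideal R) :
    (∀ r ∈ I, IsIntegralOverIdeal I r) ∧
      (∀ r s : R, IsIntegralOverIdeal I r → IsIntegralOverIdeal I s →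
        IsIntegralOverIdeal I (r + s)) ∧
      (∀ a r : R, IsIntegralOverIdeal I r → IsIntegralOverIdeal I (a * r)) := by
  refine ⟨fun r hr => ⟨1, le_refl 1, fun _ => -r, ?_, ?_⟩, fun r s hr hs => ?_, fun a r hr => ?_⟩
  · intro j hj
    simp only [Finset.mem_Icc] at hj
    obtain rfl : j = 1 := le_antisymm hj.2 hj.1
    simpa using I.neg_mem hr
  · simp
  · rw [isIntegralOverIdeal_iff] at hr hs ⊢
    rw [show (Polynomial.monomial 1 (r + s) : Polynomial R)
        = Polynomial.monomial 1 r + Polynomial.monomial 1 s by simp [map_add]]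
    exact hr.add hs
  · rw [isIntegralOverIdeal_iff] at hr ⊢
    have hCa : (Polynomial.C a : Polynomial R) ∈ reesAlgebra I := by
      rw [mem_reesAlgebra_iff]
      intro i
      rcases Nat.eq_zero_or_pos i with rfl | hi
      · simp
      · simp [Polynomial.coeff_C, Nat.pos_iff_ne_zero.mp hi]
    have : IsIntegral (reesAlgebra I) (Polynomial.C a : Polynomial R) := by
      have := isIntegral_algebraMap (R := reesAlgebra I) (A := Polynomial R)
        (x := (⟨Polynomial.C a, hCa⟩ : reesAlgebra I))
      simpa using this
    rw [show (Polynomial.monomial 1 (a * r) : Polynomial R)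
        = Polynomial.C a * Polynomial.monomial 1 r by
      rw [Polynomial.C_mul_monomial]]
    exact this.mul hr
end

section
/- Let R be a commutative ring and I, J ⊆ R ideals. If r ∈ R is integral over I and s ∈ R is integral over J, then r·s is integral over the product ideal I·J. In particular, if r is integral over I then r^m is integral over I^m for every m ≥ 1. -/
namespace IntegralAux

variable {R : Type*} [CommRing R]

lemma exists_fg_le_mem_pow (I : Ideal R) (n : ℕ) (x : R)
    (hx : x ∈ I ^ n) : ∃ I₀ : Ideal R, I₀.FG ∧ I₀ ≤ I ∧ x ∈ I₀ ^ n := by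
  induction n generalizing x with
  | zero => exact ⟨⊥, Submodule.fg_bot, bot_le, by simpa using hx⟩
  | succ n ih =>
    rw [pow_succ] at hx
    refine Submodule.mul_induction_on hx ?_ ?_
    · intro y hy a ha
      obtain ⟨I₀, hfg, hle, hmem⟩ := ih y hy
      refine ⟨I₀ ⊔ Ideal.span {a}, Submodule.FG.sup hfg (Submodule.fg_span_singleton a),
        sup_le hle (by rwa [Ideal.span_le, Set.singleton_subset_iff]), ?_⟩
      rw [pow_succ]
      exact Submodule.mul_mem_mul
        (Ideal.pow_right_mono le_sup_left _ hmem)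
        (le_sup_right (a := I₀) (Ideal.subset_span rfl))
    · rintro x y ⟨I₀, h0, hle0, hm0⟩ ⟨I₁, h1, hle1, hm1⟩
      exact ⟨I₀ ⊔ I₁, Submodule.FG.sup h0 h1, sup_le hle0 hle1,
        add_mem (Ideal.pow_right_mono le_sup_left _ hm0)
          (Ideal.pow_right_mono le_sup_right _ hm1)⟩

lemma mono {I I' : Ideal R} {r : R} (h : IsIntegralOverIdeal I r) (hle : I ≤ I') :
    IsIntegralOverIdeal I' r := by
  obtain ⟨k, hk, c, hc, heq⟩ := h
  exact ⟨k, hk, c, fun j hj => Ideal.pow_right_mono hle j (hc j hj), heq⟩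

lemma exists_fg {I : Ideal R} {r : R} (h : IsIntegralOverIdeal I r) :
    ∃ I₀ : Ideal R, I₀.FG ∧ I₀ ≤ I ∧ IsIntegralOverIdeal I₀ r := by
  classical
  obtain ⟨k, hk, c, hc, heq⟩ := h
  choose! F hF1 hF2 hF3 using fun j (hj : j ∈ Finset.Icc 1 k) =>
    exists_fg_le_mem_pow I j (c j) (hc j hj)
  refine ⟨(Finset.Icc 1 k).sup F, ?_, ?_, k, hk, c, ?_, heq⟩
  · exact Finset.sup_induction Submodule.fg_bot (fun a ha b hb => Submodule.FG.sup ha hb)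
      (fun j hj => hF1 j hj)
  · exact Finset.sup_le fun j hj => hF2 j hj
  · intro j hj
    exact Ideal.pow_right_mono (Finset.le_sup hj) j (hF3 j hj)

/-- the auxiliary module `∑ I^i (r)^(k-1-i)` -/
noncomputable def auxM (I : Ideal R) (r : R) (k : ℕ) : Ideal R :=
  ∑ i ∈ Finset.range k, I ^ i * (Ideal.span {r}) ^ (k - 1 - i)

lemma auxM_fg (I : Ideal R) (hI : I.FG) (r : R) (k : ℕ) : (auxM I r k).FG := by
  unfold auxM
  refine Finset.sum_induction _ Submodule.FG (fun a b ha hb => by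
    rw [Submodule.add_eq_sup]; exact Submodule.FG.sup ha hb) Submodule.fg_bot ?_
  intro i _
  exact Submodule.FG.mul (Submodule.FG.pow hI i)
    (Submodule.FG.pow (Submodule.fg_span_singleton r) _)

lemma term_le_auxM (I : Ideal R) (r : R) (k : ℕ) {i : ℕ} (hi : i < k) :
    I ^ i * (Ideal.span {r}) ^ (k - 1 - i) ≤ auxM I r k :=
  Finset.single_le_sum (f := fun i => I ^ i * (Ideal.span {r}) ^ (k - 1 - i))
    (fun i _ => zero_le) (Finset.mem_range.mpr hi)

lemma pow_mem_auxM (I : Ideal R) (r : R) (k : ℕ) (hk : 1 ≤ k) :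
    r ^ (k - 1) ∈ auxM I r k := by
  have h : r ^ (k - 1) ∈ I ^ 0 * (Ideal.span {r}) ^ (k - 1 - 0) := by
    rw [pow_zero, one_mul, Nat.sub_zero]
    exact Ideal.pow_mem_pow (Ideal.mem_span_singleton_self r) (k - 1)
  exact term_le_auxM I r k hk h

lemma key_le (I : Ideal R) (r : R) (k : ℕ) (hk : 1 ≤ k) (c : ℕ → R)
    (hc : ∀ j ∈ Finset.Icc 1 k, c j ∈ I ^ j)
    (heq : r ^ k + ∑ j ∈ Finset.Icc 1 k, c j * r ^ (k - j) = 0) :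
    Ideal.span {r} * auxM I r k ≤ I * auxM I r k := by
  have hrk : r ^ k ∈ I * auxM I r k := by
    have h0 : r ^ k = -∑ j ∈ Finset.Icc 1 k, c j * r ^ (k - j) := by
      linear_combination heq
    rw [h0]
    refine neg_mem (Ideal.sum_mem _ fun j hj => ?_)
    obtain ⟨hj1, hj2⟩ := Finset.mem_Icc.mp hj
    have h1 : c j * r ^ (k - j) ∈ I ^ j * Ideal.span {r} ^ (k - j) :=
      Submodule.mul_mem_mul (hc j hj) (Ideal.pow_mem_pow (Ideal.mem_span_singleton_self r) (k - j))
    have e : I ^ j = I * I ^ (j - 1) := by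
      rw [← pow_succ']
      congr 1
      omega
    have h3 := term_le_auxM I r k (i := j - 1) (by omega)
    have e2 : k - 1 - (j - 1) = k - j := by omega
    rw [e2] at h3
    rw [e, mul_assoc] at h1
    exact Ideal.mul_mono_right h3 h1
  unfold auxM
  rw [Finset.mul_sum]
  refine Finset.sum_induction _ (fun x => x ≤ I * auxM I r k) (fun a b ha hb => by
    rw [Submodule.add_eq_sup]; exact sup_le ha hb) zero_le ?_
  intro i hi
  rw [Finset.mem_range] at hi
  have e1 : Ideal.span {r} * (I ^ i * Ideal.span {r} ^ (k - 1 - i))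
      = I ^ i * Ideal.span {r} ^ (k - i) := by
    rw [mul_comm (Ideal.span {r}), mul_assoc, ← pow_succ]
    have e : k - 1 - i + 1 = k - i := by omega
    rw [e]
  rw [e1]
  rcases Nat.eq_zero_or_pos i with h0 | h1
  · subst h0
    rw [pow_zero, one_mul, Nat.sub_zero, Ideal.span_singleton_pow]
    rwa [Ideal.span_singleton_le_iff_mem]
  · have e : I ^ i = I * I ^ (i - 1) := by
      rw [← pow_succ']
      congr 1
      omega
    rw [e, mul_assoc]
    refine Ideal.mul_mono_right ?_
    have h3 := term_le_auxM I r k (i := i - 1) (by omega)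
    have e2 : k - 1 - (i - 1) = k - i := by omega
    rwa [e2] at h3

end IntegralAux

namespace IntegralAux

variable {R : Type*} [CommRing R]

lemma core (I J : Ideal R) (hI : I.FG) (hJ : J.FG) (r s : R)
    (hr : IsIntegralOverIdeal I r) (hs : IsIntegralOverIdeal J s) :
    IsIntegralOverIdeal (I * J) (r * s) := by
  classical
  obtain ⟨k, hk, c, hc, hceq⟩ := hr
  obtain ⟨l, hl, d, hd, hdeq⟩ := hs
  set M : Ideal R := auxM I r k with hM
  set N : Ideal R := auxM J s l with hN
  set K : Ideal R := M * N with hK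
  haveI : Module.Finite R K :=
    Module.Finite.iff_fg.mpr (Submodule.FG.mul (auxM_fg I hI r k) (auxM_fg J hJ s l))
  have hmapsto : ∀ x ∈ K, (r * s) * x ∈ K := fun x hx => K.mul_mem_left _ hx
  let f : Module.End R K := (LinearMap.mulLeft R (r * s)).restrict hmapsto
  have hprod : Ideal.span {r * s} * K ≤ (I * J) * K := by
    have hMle := key_le I r k hk c hc hceq
    have hNle := key_le J s l hl d hd hdeq
    have e1 : Ideal.span {r * s} * K = (Ideal.span {r} * M) * (Ideal.span {s} * N) := by
      rw [← Ideal.span_singleton_mul_span_singleton, hK]; ring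
    rw [e1]
    calc (Ideal.span {r} * M) * (Ideal.span {s} * N) ≤ (I * M) * (J * N) :=
          Ideal.mul_mono hMle hNle
      _ = (I * J) * K := by rw [hK]; ring
  have hfcoe : ∀ x : K, ((f x : R)) = (r * s) * x := fun x =>
    LinearMap.restrict_coe_apply _ _ _
  have hrange : LinearMap.range f ≤ (I * J) • (⊤ : Submodule R K) := by
    rintro _ ⟨x, rfl⟩
    rw [Submodule.mem_smul_top_iff, Ideal.smul_eq_mul, hfcoe]
    exact hprod (Submodule.mul_mem_mul (Ideal.mem_span_singleton_self (r * s)) x.2)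
  obtain ⟨p, hmonic, hdeg, hcoeff, haeval⟩ :=
    LinearMap.exists_monic_and_coeff_mem_pow_and_aeval_eq_zero_of_range_le_smul R f (I * J) hrange
  set D := p.natDegree with hD
  -- the distinguished element
  have hm0 : r ^ (k - 1) * s ^ (l - 1) ∈ K :=
    Submodule.mul_mem_mul (pow_mem_auxM I r k hk) (pow_mem_auxM J s l hl)
  set m : K := ⟨r ^ (k - 1) * s ^ (l - 1), hm0⟩ with hm
  have hpowf : ∀ (n : ℕ) (x : K), ((f ^ n) x : R) = (r * s) ^ n * x := by
    intro n
    induction n with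
    | zero => intro x; simp
    | succ n ih =>
      intro x
      rw [pow_succ, Module.End.mul_apply, ih, hfcoe]
      ring
  -- the scalar equation
  have hsum : ∑ i ∈ Finset.range (D + 1),
      p.coeff i * ((r * s) ^ i * (r ^ (k - 1) * s ^ (l - 1))) = 0 := by
    have h1 : ((Polynomial.aeval f p) m : R)
        = ∑ i ∈ Finset.range (D + 1), p.coeff i * ((r * s) ^ i * (r ^ (k - 1) * s ^ (l - 1))) := by
      rw [Polynomial.aeval_eq_sum_range, LinearMap.coe_sum, Finset.sum_apply,
        AddSubmonoidClass.coe_finset_sum, ← hD]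
      refine Finset.sum_congr rfl fun i _ => ?_
      rw [LinearMap.smul_apply, Submodule.coe_smul, hpowf, smul_eq_mul]
    rw [← h1, haeval]
    simp
  -- multiply by r^(l-1) * s^(k-1) * (r*s)
  obtain ⟨k', rfl⟩ : ∃ k', k = k' + 1 := ⟨k - 1, by omega⟩
  obtain ⟨l', rfl⟩ : ∃ l', l = l' + 1 := ⟨l - 1, by omega⟩
  simp only [Nat.add_sub_cancel] at hsum
  have hsum2 : ∑ i ∈ Finset.range (D + 1), p.coeff i * (r * s) ^ (i + (k' + l') + 1) = 0 := by
    have h2 := congrArg (· * (r ^ l' * s ^ k' * (r * s))) hsum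
    simp only [zero_mul] at h2
    rw [Finset.sum_mul] at h2
    rw [← h2]
    refine Finset.sum_congr rfl fun i _ => ?_
    ring
  refine ⟨D + (k' + l') + 1, by omega,
    fun j => if j ≤ D then p.coeff (D - j) else 0, ?_, ?_⟩
  · intro j hj
    obtain ⟨hj1, hj2⟩ := Finset.mem_Icc.mp hj
    show (if j ≤ D then p.coeff (D - j) else 0) ∈ (I * J) ^ j
    by_cases h : j ≤ D
    · rw [if_pos h]
      have := hcoeff (D - j)
      have e : D - (D - j) = j := by omega
      rwa [e] at this
    · rw [if_neg h]
      exact zero_mem _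
  · -- the monic equation
    set n := D + (k' + l') + 1 with hn
    have hsplit : ∑ j ∈ Finset.Icc 1 n,
        (if j ≤ D then p.coeff (D - j) else 0) * (r * s) ^ (n - j)
        = ∑ j ∈ Finset.Icc 1 D, p.coeff (D - j) * (r * s) ^ (n - j) := by
      rw [← Finset.sum_subset (Finset.Icc_subset_Icc_right (by omega) : Finset.Icc 1 D ⊆ Finset.Icc 1 n)]
      · refine Finset.sum_congr rfl fun j hj => ?_
        obtain ⟨hj1, hj2⟩ := Finset.mem_Icc.mp hj
        rw [if_pos hj2]
      · intro j hjn hjD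
        obtain ⟨hj1, hj2⟩ := Finset.mem_Icc.mp hjn
        have : ¬ j ≤ D := fun h => hjD (Finset.mem_Icc.mpr ⟨hj1, h⟩)
        rw [if_neg this, zero_mul]
    have hreindex : ∑ j ∈ Finset.Icc 1 D, p.coeff (D - j) * (r * s) ^ (n - j)
        = ∑ i ∈ Finset.range D, p.coeff i * (r * s) ^ (i + (k' + l') + 1) := by
      refine Finset.sum_nbij' (fun j => D - j) (fun i => D - i) ?_ ?_ ?_ ?_ ?_ <;>
        intro a ha <;>
        simp only [Finset.mem_Icc, Finset.mem_range, hn] at *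
      · omega
      · omega
      · omega
      · omega
      · have e : D + (k' + l') + 1 - a = (D - a) + (k' + l') + 1 := by omega
        rw [e]
    have hD1 : p.coeff D = 1 := hmonic.coeff_natDegree
    have htop : (r * s) ^ n = p.coeff D * (r * s) ^ (D + (k' + l') + 1) := by
      rw [hD1, one_mul]
    rw [hsplit, hreindex, htop, add_comm,
      ← Finset.sum_range_succ (fun i => p.coeff i * (r * s) ^ (i + (k' + l') + 1)) D]
    exact hsum2

end IntegralAux


namespace IntegralAux

variable {R : Type*} [CommRing R]

lemma main (I J : Ideal R) (r s : R)
    (hr : IsIntegralOverIdeal I r) (hs : IsIntegralOverIdeal J s) :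
    IsIntegralOverIdeal (I * J) (r * s) := by
  obtain ⟨I₀, hIfg, hIle, hrI⟩ := exists_fg hr
  obtain ⟨J₀, hJfg, hJle, hsJ⟩ := exists_fg hs
  exact mono (core I₀ J₀ hIfg hJfg r s hrI hsJ) (Ideal.mul_mono hIle hJle)

end IntegralAux

/-- If `r` is integral over `I` and `s` is integral over `J`, then `r·s` is
integral over `I·J`.  In particular `r` integral over `I` implies `r^m`
integral over `I^m` for every `m ≥ 1`. -/
theorem isIntegralOverIdeal_mul {R : Type*} [CommRing R] (I J : Ideal R) (r s : R)
    (hr : IsIntegralOverIdeal I r) (hs : IsIntegralOverIdeal J s) :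
    IsIntegralOverIdeal (I * J) (r * s) ∧
      ∀ (m : ℕ), 1 ≤ m → ∀ t : R, IsIntegralOverIdeal I t →
        IsIntegralOverIdeal (I ^ m) (t ^ m) := by
  refine ⟨IntegralAux.main I J r s hr hs, ?_⟩
  intro m hm t ht
  induction m, hm using Nat.le_induction with
  | base => rwa [pow_one, pow_one]
  | succ m hm ih =>
    rw [pow_succ, pow_succ]
    exact IntegralAux.main (I ^ m) I (t ^ m) t ih ht
end

section
/- Let K be a field, R = K[x_1, …, x_n], and let φ : K[x_1, …, x_n] → K[x_1, …, x_{n-1}] be the K-algebra homomorphism sending x_i ↦ x_i for i < n and x_n ↦ 0 (so φ is the quotient by the ideal (x_n)). Let I ⊆ R be an ideal. Then an element g ∈ K[x_1, …, x_{n-1}] is integral over the ideal φ(I + (x_n)) = generated image of I if and only if g = φ(f) for some f ∈ R integral over I + (x_n). Equivalently, the image under φ of the integral closure of (I, x_n) equals the integral closure of the image ideal (I, x_n)/(x_n). -/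
open MvPolynomial

/-- Let `φ : K[x_1,…,x_{n+1}] → K[x_1,…,x_n]` be the `K`-algebra map sending the
last variable to `0` and fixing the others (the quotient by `(x_{n+1})`).
For an ideal `I`, an element `g` of the target is integral over the image ideal
`φ(I + (x_{n+1}))` iff `g = φ(f)` for some `f` integral over `I + (x_{n+1})`;
i.e. the image of the integral closure of `(I, x_{n+1})` is the integral closure
of `(I, x_{n+1})/(x_{n+1})`. -/
theorem integralClosure_image_setLastToZero {K : Type*} [Field K] (n : ℕ)
    (I : Ideal (MvPolynomial (Fin (n + 1)) K))
    (φ : MvPolynomial (Fin (n + 1)) K →ₐ[K] MvPolynomial (Fin n) K)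
    (hφ : φ = aeval (fun i : Fin (n + 1) =>
      Fin.lastCases (0 : MvPolynomial (Fin n) K) (fun j => X j) i))
    (g : MvPolynomial (Fin n) K) :
    IsIntegralOverIdeal
        (Ideal.map φ (I + Ideal.span {X (Fin.last n)})) g ↔
      ∃ f : MvPolynomial (Fin (n + 1)) K,
        IsIntegralOverIdeal (I + Ideal.span {X (Fin.last n)}) f ∧ φ f = g := by
  set J : Ideal (MvPolynomial (Fin (n + 1)) K) := I + Ideal.span {X (Fin.last n)} with hJ
  set ψ : MvPolynomial (Fin n) K →ₐ[K] MvPolynomial (Fin (n + 1)) K :=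
    rename (Fin.castSucc) with hψ
  have hcomp : ∀ p, φ (ψ p) = p := by
    intro p
    have : φ.comp ψ = AlgHom.id K _ := by
      apply algHom_ext
      intro j
      simp [hφ, hψ, Fin.lastCases_castSucc]
    simpa using congrArg (fun h => h p) (congrArg DFunLike.coe this)
  have hsec : ∀ p, p - ψ (φ p) ∈ Ideal.span {X (Fin.last n)} := by
    intro p
    induction p using MvPolynomial.induction_on with
    | C a => simp [hφ, hψ]
    | add p q hp hq =>
        have := Ideal.add_mem _ hp hq
        convert this using 1
        simp only [map_add]; ring
    | mul_X p i hp =>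
        induction i using Fin.lastCases with
        | last =>
          have h1 : φ (X (Fin.last n) : MvPolynomial (Fin (n + 1)) K) = 0 := by
            simp [hφ]
          rw [map_mul, h1, mul_zero, map_zero, sub_zero]
          exact Ideal.mem_span_singleton.mpr (dvd_mul_left _ _)
        | cast j =>
          have h1 : φ (X (Fin.castSucc j) : MvPolynomial (Fin (n + 1)) K) = X j := by
            simp [hφ, Fin.lastCases_castSucc]
          have h2 : ψ (X j : MvPolynomial (Fin n) K) = X (Fin.castSucc j) := by
            simp [hψ]
          rw [map_mul, h1, map_mul, h2]
          have : p * X (Fin.castSucc j) - ψ (φ p) * X (Fin.castSucc j)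
              = (p - ψ (φ p)) * X (Fin.castSucc j) := by ring
          rw [this]
          exact Ideal.mul_mem_right _ _ hp
  have hspanJ : Ideal.span {X (Fin.last n)} ≤ J := le_sup_right
  have hψJ : Ideal.map ψ (Ideal.map φ J) ≤ J := by
    rw [Ideal.map_le_iff_le_comap, Ideal.map_le_iff_le_comap]
    intro a ha
    rw [Ideal.mem_comap, Ideal.mem_comap]
    have h2 : ψ (φ a) = a - (a - ψ (φ a)) := by ring
    rw [h2]
    exact Ideal.sub_mem _ ha (hspanJ (hsec a))
  constructor
  · rintro ⟨k, hk, c, hc, heq⟩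
    refine ⟨ψ g, ⟨k, hk, fun j => ψ (c j), ?_, ?_⟩, hcomp g⟩
    · intro j hj
      have h1 : ψ (c j) ∈ Ideal.map ψ ((Ideal.map φ J) ^ j) :=
        Ideal.mem_map_of_mem _ (hc j hj)
      rw [Ideal.map_pow] at h1
      exact Ideal.pow_right_mono hψJ j h1
    · have := congrArg ψ heq
      simpa [map_add, map_pow, map_sum, map_mul] using this
  · rintro ⟨f, ⟨k, hk, c, hc, heq⟩, rfl⟩
    refine ⟨k, hk, fun j => φ (c j), ?_, ?_⟩
    · intro j hj
      have h1 : φ (c j) ∈ Ideal.map φ (J ^ j) := Ideal.mem_map_of_mem _ (hc j hj)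
      rwa [Ideal.map_pow] at h1
    · have := congrArg φ heq
      simpa [map_add, map_pow, map_sum, map_mul] using this
end

section
/- Let K be an infinite field, R a commutative K-algebra, e_1, …, e_d ∈ R, and p_1, …, p_d ∈ K[y_1,…,y_m] polynomials; for u ∈ K^m set r_u := Σ_{i=1}^{d} p_i(u)·e_i. Let V ⊆ U ⊆ K^m be subsets with V Zariski dense in U. Then there is an equality of ideals of R: the ideal generated by {r_u : u ∈ V} equals the ideal generated by {r_u : u ∈ U}. -/
open MvPolynomial

/-- Let `K` be an infinite field and `u ↦ r_u = Σ_i p_i(u)·e_i` a polynomial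
family of elements of a `K`-algebra `R`.  If `V ⊆ U ⊆ K^m` with `V` Zariski
dense in `U`, then the ideal generated by `{r_u : u ∈ V}` equals the ideal
generated by `{r_u : u ∈ U}`. -/
theorem span_dense_family_eq {K : Type*} [Field K] [Infinite K] {R : Type*}
    [CommRing R] [Algebra K R] {d m : ℕ} (e : Fin d → R)
    (p : Fin d → MvPolynomial (Fin m) K) (U V : Set (Fin m → K)) (hVU : V ⊆ U)
    (hdense : ∀ f : MvPolynomial (Fin m) K,
      (∀ u ∈ V, eval u f = 0) → ∀ u ∈ U, eval u f = 0) :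
    Ideal.span ((fun u : Fin m → K => ∑ i : Fin d, eval u (p i) • e i) '' V) =
      Ideal.span ((fun u : Fin m → K => ∑ i : Fin d, eval u (p i) • e i) '' U) := by
  set r : (Fin m → K) → R := fun u => ∑ i : Fin d, eval u (p i) • e i with hr
  refine le_antisymm (Ideal.span_mono (Set.image_mono hVU)) ?_
  rw [Ideal.span_le]
  rintro _ ⟨u, hu, rfl⟩
  -- It suffices to show r u is in the K-span of {r v : v ∈ V}
  have key : r u ∈ Submodule.span K (r '' V) := by
    by_contra hx
    obtain ⟨φ, hφx, hφ⟩ := (Submodule.span K (r '' V)).exists_dual_map_eq_bot_of_notMem hx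
      inferInstance
    have hφV : ∀ v ∈ V, φ (r v) = 0 := by
      intro v hv
      have : r v ∈ Submodule.span K (r '' V) := Submodule.subset_span ⟨v, hv, rfl⟩
      have := Submodule.mem_map_of_mem (f := φ) this
      rw [hφ] at this
      simpa using this
    set f : MvPolynomial (Fin m) K := ∑ i : Fin d, C (φ (e i)) * p i with hf
    have heval : ∀ w : Fin m → K, eval w f = φ (r w) := by
      intro w
      simp only [hf, hr, map_sum, eval_mul, eval_C, map_smul, smul_eq_mul, mul_comm]
    have : eval u f = 0 := by
      refine hdense f (fun v hv => ?_) u hu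
      rw [heval]; exact hφV v hv
    rw [heval] at this
    exact hφx this
  -- transfer K-span membership to ideal membership
  have hle : Submodule.span K (r '' V) ≤
      (Ideal.span (r '' V)).restrictScalars K := by
    rw [Submodule.span_le]
    exact fun x hx => Ideal.subset_span hx
  exact hle key
end

section
/- Let K be an infinite field, R a finitely generated commutative K-algebra, e_1, …, e_d ∈ R, and p_1, …, p_d, q_1, …, q_d ∈ K[y_1,…,y_m] polynomials; for u ∈ K^m set r_u := Σ_{i=1}^{d} p_i(u)·e_i and s_u := Σ_{i=1}^{d} q_i(u)·e_i. Let U ⊆ K^m be a subset whose vanishing ideal in K[y_1,…,y_m] is a prime ideal (i.e., U is irreducible), and let V ⊆ U be Zariski dense in U. Then an element of R is integral over the ideal generated by {r_u·s_u : u ∈ V} if and only if it is integral over the product of the ideal generated by {r_u : u ∈ U} and the ideal generated by {s_u : u ∈ U}; that is, the two ideals have the same integral closure. -/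
open Polynomial in
/-- Polynomials whose coefficients all lie in a given subring. -/
def coeffsInSubring {S : Type*} [CommRing S] (A : Subring S) : Subring (Polynomial S) where
  carrier := {f | ∀ i, f.coeff i ∈ A}
  zero_mem' := by intro i; simp [A.zero_mem]
  one_mem' := by intro i; rw [coeff_one]; split <;> simp [A.one_mem, A.zero_mem]
  add_mem' := by intro f g hf hg i; rw [coeff_add]; exact A.add_mem (hf i) (hg i)
  neg_mem' := by intro f hf i; rw [coeff_neg]; exact A.neg_mem (hf i)
  mul_mem' := by
    intro f g hf hg i; rw [coeff_mul]
    exact Subring.sum_mem _ fun x _ => A.mul_mem (hf x.1) (hg x.2)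

open Polynomial in
/-- Polynomials whose `j`-th coefficient lies in `I ^ j`. -/
def gradedCoeffs {R : Type*} [CommRing R] (I : Ideal R) : Subring (Polynomial R) where
  carrier := {f | ∀ j, f.coeff j ∈ I ^ j}
  zero_mem' := by intro j; simp
  one_mem' := by
    intro j; rw [coeff_one]; split
    · next h => subst h; simp [Ideal.one_eq_top]
    · simp
  add_mem' := by intro f g hf hg j; rw [coeff_add]; exact Ideal.add_mem _ (hf j) (hg j)
  neg_mem' := by intro f hf j; rw [coeff_neg]; exact Submodule.neg_mem _ (hf j)
  mul_mem' := by
    intro f g hf hg j; rw [coeff_mul]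
    refine Ideal.sum_mem _ fun x hx => ?_
    have hxx : x.1 + x.2 = j := Finset.HasAntidiagonal.mem_antidiagonal.mp hx
    rw [← hxx, pow_add]
    exact Ideal.mul_mem_mul (hf x.1) (hg x.2)

lemma mem_coeffsInSubring {S : Type*} [CommRing S] {A : Subring S} {f : Polynomial S}
    (h : ∀ i, f.coeff i ∈ A) : f ∈ coeffsInSubring A := h

lemma coeff_mem_of_mem_coeffsInSubring {S : Type*} [CommRing S] {A : Subring S} {f : Polynomial S}
    (h : f ∈ coeffsInSubring A) (i : ℕ) : f.coeff i ∈ A := h i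

lemma mem_gradedCoeffs {R : Type*} [CommRing R] {I : Ideal R} {f : Polynomial R}
    (h : ∀ j, f.coeff j ∈ I ^ j) : f ∈ gradedCoeffs I := h

lemma coeff_mem_of_mem_gradedCoeffs {R : Type*} [CommRing R] {I : Ideal R} {f : Polynomial R}
    (h : f ∈ gradedCoeffs I) (j : ℕ) : f.coeff j ∈ I ^ j := h j
/-- A root of a monic equation with coefficients in a valuation subring lies in it. -/
lemma mem_valuationSubring_of_monic_sum {F : Type*} [Field F] (O : ValuationSubring F)
    {x : F} {k : ℕ} (hk : 1 ≤ k) (β : ℕ → F) (hβ : ∀ j ∈ Finset.Icc 1 k, β j ∈ O)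
    (heq : x ^ k + ∑ j ∈ Finset.Icc 1 k, β j * x ^ (k - j) = 0) : x ∈ O := by
  rw [← O.valuation_le_one_iff]
  by_contra hcon
  have hx1 : (1 : _) < O.valuation x := lt_of_not_ge hcon
  have h2 : O.valuation (x ^ k) ≤ O.valuation x ^ (k - 1) := by
    have hxeq : x ^ k = -∑ j ∈ Finset.Icc 1 k, β j * x ^ (k - j) :=
      eq_neg_of_add_eq_zero_left heq
    rw [hxeq, Valuation.map_neg]
    refine Valuation.map_sum_le _ fun j hj => ?_
    rw [Valuation.map_mul, Valuation.map_pow]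
    calc O.valuation (β j) * O.valuation x ^ (k - j)
        ≤ 1 * O.valuation x ^ (k - 1) := by
          refine mul_le_mul' ((O.valuation_le_one_iff _).mpr (hβ j hj)) ?_
          refine pow_le_pow_right₀ hx1.le ?_
          have := (Finset.mem_Icc.mp hj).1
          omega
      _ = O.valuation x ^ (k - 1) := one_mul _
  have h3 : O.valuation x ^ (k - 1) < O.valuation x ^ k :=
    pow_lt_pow_right₀ hx1 (by omega)
  rw [Valuation.map_pow] at h2
  exact absurd (h2.trans_lt h3) (lt_irrefl _)
section ValuativeCriterion
open Polynomial
/-- Valuative criterion: if `x` lies in every valuation subring containing `A`, then `x`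
satisfies a monic polynomial with coefficients in `A`. -/
lemma exists_monic_coeffs_mem_of_forall_valuationSubring {F : Type*} [Field F] (A : Subring F)
    (x : F) (h : ∀ O : ValuationSubring F, A ≤ O.toSubring → x ∈ O) :
    ∃ P : Polynomial F, P.Monic ∧ (∀ i, P.coeff i ∈ A) ∧ Polynomial.eval x P = 0 := by
  by_contra hnot
  push_neg at hnot
  have hx0 : x ≠ 0 := by
    rintro rfl
    refine hnot X monic_X ?_ (by simp)
    intro i
    rw [coeff_X]
    split <;> simp [A.one_mem, A.zero_mem]
  set B := Algebra.adjoin (↥A) ({x⁻¹} : Set F) with hB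
  have hmem : x⁻¹ ∈ B.toSubring := Algebra.self_mem_adjoin_singleton _ _
  set mm : ↥B.toSubring := ⟨x⁻¹, hmem⟩ with hmm
  have hspan : Ideal.span {mm} ≠ ⊤ := by
    intro htop
    have h1 : (1 : ↥B.toSubring) ∈ Ideal.span {mm} := htop ▸ Submodule.mem_top
    obtain ⟨b, hb⟩ := Ideal.mem_span_singleton'.mp h1
    have hbF : (b : F) * x⁻¹ = 1 := congrArg Subtype.val hb
    have hbx : (b : F) = x := by
      field_simp at hbF
      exact hbF
    have hxB : x ∈ B := by
      have := b.2
      rw [Subalgebra.mem_toSubring] at this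
      rwa [hbx] at this
    have hxB' : x ∈ (Polynomial.aeval x⁻¹ : Polynomial (↥A) →ₐ[↥A] F).range := by
      rw [← Algebra.adjoin_singleton_eq_range_aeval]; exact hxB
    obtain ⟨P0, hP0⟩ := hxB'
    set n := P0.natDegree with hn
    set Q : Polynomial F :=
      X ^ (n + 1) - ∑ i ∈ Finset.range (n + 1), C ((P0.coeff i : F)) * X ^ (n - i) with hQ
    have hQmonic : Q.Monic := by
      refine monic_X_pow_sub ?_
      refine lt_of_le_of_lt (degree_sum_le _ _) ?_
      rw [Finset.sup_lt_iff (by exact_mod_cast WithBot.bot_lt_coe (n+1))]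
      intro i hi
      refine lt_of_le_of_lt (degree_C_mul_X_pow_le _ _) ?_
      exact_mod_cast Nat.lt_succ_of_le (Nat.sub_le n i)
    have hQcoeff : ∀ i, Q.coeff i ∈ A := by
      have : Q ∈ coeffsInSubring A := by
        refine Subring.sub_mem _ (Subring.pow_mem _ ?_ _) (Subring.sum_mem _ fun i _ => ?_)
        · intro i; rw [coeff_X]; split <;> simp [A.one_mem, A.zero_mem]
        · refine Subring.mul_mem _ ?_ (Subring.pow_mem _ ?_ _)
          · intro j; rw [coeff_C]; split <;> simp [A.zero_mem, SetLike.coe_mem]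
          · intro j; rw [coeff_X]; split <;> simp [A.one_mem, A.zero_mem]
      exact this
    have hQeval : Polynomial.eval x Q = 0 := by
      have haev : (Polynomial.aeval x⁻¹ P0 : F) = x := hP0
      have hsum : (∑ i ∈ Finset.range (n + 1), (P0.coeff i : F) * (x⁻¹) ^ i) = x := by
        have h2 : (Polynomial.aeval x⁻¹ P0 : F)
            = ∑ i ∈ Finset.range (n + 1), (P0.coeff i : F) * (x⁻¹) ^ i := by
          rw [Polynomial.aeval_eq_sum_range]
          exact Finset.sum_congr rfl fun i _ => by rw [Algebra.smul_def]; rfl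
        rw [← h2, haev]
      have hmul : (∑ i ∈ Finset.range (n + 1), (P0.coeff i : F) * x ^ (n - i)) = x ^ (n + 1) := by
        have : ∀ i ∈ Finset.range (n + 1), (P0.coeff i : F) * x ^ (n - i)
            = x ^ n * ((P0.coeff i : F) * (x⁻¹) ^ i) := by
          intro i hi
          have hile : i ≤ n := Nat.lt_succ_iff.mp (Finset.mem_range.mp hi)
          have : x ^ (n - i) = x ^ n * (x⁻¹) ^ i := by
            rw [inv_pow, pow_sub₀ x hx0 hile]
          rw [this]; ring
        rw [Finset.sum_congr rfl this, ← Finset.mul_sum, hsum, ← pow_succ]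
      simp only [hQ, eval_sub, eval_pow, eval_X, eval_finset_sum, eval_mul, eval_C]
      rw [hmul, sub_self]
    exact hnot Q hQmonic hQcoeff hQeval
  obtain ⟨M, hM, hle⟩ := Ideal.exists_le_maximal _ hspan
  haveI := hM.isPrime
  obtain ⟨O, hO⟩ := (LocalSubring.ofPrime B.toSubring M).exists_le_valuationSubring
  obtain ⟨hle2, hloc⟩ := hO
  have hAO : A ≤ O.toSubring := by
    intro a ha
    refine hle2 ?_
    refine LocalSubring.le_ofPrime _ _ ?_
    rw [Subalgebra.mem_toSubring]
    exact B.algebraMap_mem ⟨a, ha⟩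
  have hxO : x ∉ O := by
    intro hxO
    have hmM : mm ∈ M := hle (Ideal.subset_span rfl)
    set z : ↥(LocalSubring.ofPrime B.toSubring M).toSubring :=
      algebraMap (↥B.toSubring) _ mm with hz
    have hzF : (z : F) = x⁻¹ := rfl
    have hz' : IsUnit (Subring.inclusion hle2 z) := by
      refine isUnit_iff_exists_inv.mpr ⟨⟨x, hxO⟩, ?_⟩
      ext
      show (z : F) * x = 1
      rw [hzF, inv_mul_cancel₀ hx0]
    have hzu : IsUnit z := hloc.1 z hz'
    have := (IsLocalization.AtPrime.isUnit_to_map_iff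
      (↥(LocalSubring.ofPrime B.toSubring M).toSubring) M mm).mp hzu
    exact this hmM
  exact hxO (h O hAO)
/-- Valuative criterion over a Noetherian ring: if the image of `y` lies in every valuation
subring (of the fraction field of every minimal-prime quotient) containing the image of `A`,
then `y` satisfies a monic polynomial with coefficients in `A`. -/
lemma exists_monic_coeffs_mem_of_criterion {S : Type*} [CommRing S] [IsNoetherianRing S]
    (A : Subring S) (y : S)
    (h : ∀ Q, ∀ hQm : Q ∈ minimalPrimes S,
      letI : Q.IsPrime := hQm.1.1
      ∀ O : ValuationSubring (FractionRing (S ⧸ Q)),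
      (∀ a ∈ A, algebraMap (S ⧸ Q) (FractionRing (S ⧸ Q)) (Ideal.Quotient.mk Q a) ∈ O) →
      algebraMap (S ⧸ Q) (FractionRing (S ⧸ Q)) (Ideal.Quotient.mk Q y) ∈ O) :
    ∃ g : Polynomial S, g.Monic ∧ (∀ i, g.coeff i ∈ A) ∧ Polynomial.eval y g = 0 := by
  classical
  have hQall : ∀ Q ∈ minimalPrimes S,
      ∃ g : Polynomial S, g.Monic ∧ (∀ i, g.coeff i ∈ A) ∧ Polynomial.eval y g ∈ Q := by
    intro Q hQmem
    haveI : Q.IsPrime := hQmem.1.1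
    set F := FractionRing (S ⧸ Q) with hF
    set φ : S →+* F := (algebraMap (S ⧸ Q) F).comp (Ideal.Quotient.mk Q) with hφ
    obtain ⟨P, hPm, hPc, hPe⟩ :=
      exists_monic_coeffs_mem_of_forall_valuationSubring (A.map φ) (φ y) (by
        intro O hAO
        exact h Q hQmem O (fun a ha => hAO ⟨a, ha, rfl⟩))
    have hl : P ∈ Polynomial.lifts (φ.comp A.subtype) := by
      rw [Polynomial.lifts_iff_coeff_lifts]
      intro i
      obtain ⟨a, ha, he⟩ := hPc i
      exact ⟨⟨a, ha⟩, he⟩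
    obtain ⟨q0, hq0map, _, hq0monic⟩ := Polynomial.lifts_and_degree_eq_and_monic hl hPm
    refine ⟨q0.map A.subtype, hq0monic.map _, fun i => ?_, ?_⟩
    · rw [Polynomial.coeff_map]; exact (q0.coeff i).2
    · have hmapmap : (q0.map A.subtype).map φ = P := by
        rw [Polynomial.map_map]; exact hq0map
      have h0 : φ (Polynomial.eval y (q0.map A.subtype)) = 0 := by
        rw [← Polynomial.eval₂_at_apply, ← Polynomial.eval_map, hmapmap]
        exact hPe
      have h1 : Ideal.Quotient.mk Q (Polynomial.eval y (q0.map A.subtype)) = 0 := by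
        apply IsFractionRing.injective (S ⧸ Q) F
        rw [map_zero]
        exact h0
      exact Ideal.Quotient.eq_zero_iff_mem.mp h1
  choose g hmonic hcoeff hmemQ using hQall
  set T := (minimalPrimes.finite_of_isNoetherianRing S).toFinset with hT
  have hTm : ∀ Q ∈ T, Q ∈ minimalPrimes S := fun Q hQ => (Set.Finite.mem_toFinset _).mp hQ
  set G : Polynomial S := ∏ Q ∈ T.attach, g Q.1 (hTm Q.1 Q.2) with hG
  have hGmonic : G.Monic := Polynomial.monic_prod_of_monic _ _ fun Q _ => hmonic Q.1 _
  have hGC : G ∈ coeffsInSubring A :=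
    Subring.prod_mem _ fun Q _ => mem_coeffsInSubring (hcoeff Q.1 _)
  have hGnil : Polynomial.eval y G ∈ nilradical S := by
    rw [nilradical_eq_sInf]
    refine Submodule.mem_sInf.mpr fun P hP => ?_
    haveI : Ideal.IsPrime P := hP
    obtain ⟨Q, hQmin, hQle⟩ := Ideal.exists_minimalPrimes_le (bot_le : ⊥ ≤ P)
    have hQT : Q ∈ T := (Set.Finite.mem_toFinset _).mpr hQmin
    have : Polynomial.eval y G ∈ Q := by
      rw [hG, Polynomial.eval_prod]
      rw [← Finset.prod_erase_mul _ _ (Finset.mem_attach T ⟨Q, hQT⟩)]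
      exact Q.mul_mem_left _ (hmemQ Q (hTm Q hQT))
    exact hQle this
  obtain ⟨c, hc⟩ := hGnil
  have hc' : Polynomial.eval y G ^ c = 0 := by simpa using hc
  refine ⟨G ^ (c + 1), hGmonic.pow _, ?_, ?_⟩
  · exact coeff_mem_of_mem_coeffsInSubring (Subring.pow_mem _ hGC _)
  · rw [Polynomial.eval_pow, pow_succ, hc', zero_mul]
end ValuativeCriterion
open MvPolynomial

lemma core_valuation_lemma {K : Type*} [Field K] {d m : ℕ}
    (p q : Fin d → MvPolynomial (Fin m) K) (U V : Set (Fin m → K))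
    (hU : (vanishingIdeal K U).IsPrime)
    (hdense : ∀ f : MvPolynomial (Fin m) K, (∀ u ∈ V, eval u f = 0) → ∀ u ∈ U, eval u f = 0)
    {F : Type*} [Field F] (κ : K →+* F) (ε : Fin d → F) (χ : F)
    (O : ValuationSubring F) (hκ : ∀ l : K, κ l ∈ O)
    (hgen : ∀ w ∈ V, (∑ i, κ (eval w (p i)) * ε i) * (∑ i, κ (eval w (q i)) * ε i) * χ ∈ O)
    {u v : Fin m → K} (hu : u ∈ U) (hv : v ∈ U) :
    (∑ i, κ (eval u (p i)) * ε i) * (∑ i, κ (eval v (q i)) * ε i) * χ ∈ O := by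
  classical
  set a : (Fin m → K) → F := fun w => ∑ i, κ (eval w (p i)) * ε i with hadef
  set b : (Fin m → K) → F := fun w => ∑ i, κ (eval w (q i)) * ε i with hbdef
  show a u * b v * χ ∈ O
  by_cases ha0 : a u = 0
  · rw [ha0, zero_mul, zero_mul]; exact O.zero_mem
  by_cases hb0 : b v = 0
  · rw [hb0, mul_zero, zero_mul]; exact O.zero_mem
  letI : Algebra K F := κ.toAlgebra
  have halg : (algebraMap K F) = κ := rfl
  have hsmul : ∀ (l : K) (x : F), l • x = κ l * x := fun l x => by
    rw [Algebra.smul_def, halg]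
  have hκ1 : ∀ l : K, O.valuation (κ l) ≤ 1 := fun l => (O.valuation_le_one_iff _).mpr (hκ l)
  have hdual : ∀ c : F, c ≠ 0 → ∃ ℓ : F →ₗ[K] K,
      (∀ x : F, O.valuation x < O.valuation c → ℓ x = 0) ∧ ℓ c ≠ 0 := by
    intro c hc
    have hvc : O.valuation c ≠ 0 := by
      simpa using hc
    set W : Submodule K F :=
      { carrier := {x | O.valuation x < O.valuation c}
        add_mem' := fun hx hy => lt_of_le_of_lt (O.valuation.map_add _ _) (max_lt hx hy)
        zero_mem' := by
          show O.valuation 0 < O.valuation c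
          rw [Valuation.map_zero]
          exact zero_lt_iff.mpr hvc
        smul_mem' := fun l x hx => by
          show O.valuation (l • x) < O.valuation c
          rw [hsmul, map_mul]
          calc O.valuation (κ l) * O.valuation x ≤ 1 * O.valuation x :=
                mul_le_mul_left (hκ1 l) _
            _ = O.valuation x := one_mul _
            _ < O.valuation c := hx } with hW
    have hcW : c ∉ W := by
      intro hmem
      have h' : O.valuation c < O.valuation c := hmem
      exact lt_irrefl _ h'
    have hmkc : (Submodule.Quotient.mk c : F ⧸ W) ≠ 0 := by
      rw [Ne, Submodule.Quotient.mk_eq_zero]; exact hcW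
    have hexφ : ¬ ∀ φ : Module.Dual K (F ⧸ W), φ (Submodule.Quotient.mk c) = 0 := by
      rw [Module.forall_dual_apply_eq_zero_iff K]; exact hmkc
    push_neg at hexφ
    obtain ⟨φ0, hφ0⟩ := hexφ
    refine ⟨φ0.comp W.mkQ, fun x hx => ?_, ?_⟩
    · have hx0 : W.mkQ x = 0 := (Submodule.Quotient.mk_eq_zero W).mpr hx
      rw [LinearMap.comp_apply, hx0, map_zero]
    · simpa [LinearMap.comp_apply, Submodule.mkQ_apply] using hφ0
  obtain ⟨ℓa, hℓa0, hℓa⟩ := hdual (a u) ha0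
  obtain ⟨ℓb, hℓb0, hℓb⟩ := hdual (b v) hb0
  set g : MvPolynomial (Fin m) K := ∑ i, MvPolynomial.C (ℓa (ε i)) * p i with hg
  set h : MvPolynomial (Fin m) K := ∑ i, MvPolynomial.C (ℓb (ε i)) * q i with hh
  have hevalg : ∀ w, (eval w) g = ℓa (a w) := by
    intro w
    have h1 : (eval w) g = ∑ i, ℓa (ε i) * eval w (p i) := by
      rw [hg, map_sum]
      exact Finset.sum_congr rfl fun i _ => by rw [map_mul, eval_C]
    have haw : a w = ∑ i, (eval w (p i)) • ε i := by
      rw [hadef]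
      exact Finset.sum_congr rfl fun i _ => (hsmul _ _).symm
    have h2 : ℓa (a w) = ∑ i, eval w (p i) * ℓa (ε i) := by
      rw [haw, map_sum]
      exact Finset.sum_congr rfl fun i _ => by rw [map_smul, smul_eq_mul]
    rw [h1, h2]
    exact Finset.sum_congr rfl fun i _ => mul_comm _ _
  have hevalh : ∀ w, (eval w) h = ℓb (b w) := by
    intro w
    have h1 : (eval w) h = ∑ i, ℓb (ε i) * eval w (q i) := by
      rw [hh, map_sum]
      exact Finset.sum_congr rfl fun i _ => by rw [map_mul, eval_C]
    have hbw : b w = ∑ i, (eval w (q i)) • ε i := by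
      rw [hbdef]
      exact Finset.sum_congr rfl fun i _ => (hsmul _ _).symm
    have h2 : ℓb (b w) = ∑ i, eval w (q i) * ℓb (ε i) := by
      rw [hbw, map_sum]
      exact Finset.sum_congr rfl fun i _ => by rw [map_smul, smul_eq_mul]
    rw [h1, h2]
    exact Finset.sum_congr rfl fun i _ => mul_comm _ _
  have hgnot : g ∉ vanishingIdeal K U := by
    intro hmem
    exact hℓa (by rw [← hevalg u]; exact (mem_vanishingIdeal_iff.mp hmem) u hu)
  have hhnot : h ∉ vanishingIdeal K U := by
    intro hmem
    exact hℓb (by rw [← hevalh v]; exact (mem_vanishingIdeal_iff.mp hmem) v hv)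
  have hghnot : g * h ∉ vanishingIdeal K U := fun hmem =>
    ((hU.mem_or_mem hmem).elim hgnot hhnot)
  have hnotall : ¬ ∀ w ∈ V, eval w (g * h) = 0 := fun hall =>
    hghnot (mem_vanishingIdeal_iff.mpr (hdense _ hall))
  push_neg at hnotall
  obtain ⟨w, hwV, hw⟩ := hnotall
  rw [map_mul] at hw
  have hwg : eval w g ≠ 0 := fun e => hw (by rw [e, zero_mul])
  have hwh : eval w h ≠ 0 := fun e => hw (by rw [e, mul_zero])
  have hva : O.valuation (a u) ≤ O.valuation (a w) := by
    by_contra hlt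
    exact hwg (by rw [hevalg w]; exact hℓa0 _ (lt_of_not_ge hlt))
  have hvb : O.valuation (b v) ≤ O.valuation (b w) := by
    by_contra hlt
    exact hwh (by rw [hevalh w]; exact hℓb0 _ (lt_of_not_ge hlt))
  rw [← O.valuation_le_one_iff]
  calc O.valuation (a u * b v * χ) = O.valuation (a u) * O.valuation (b v) * O.valuation χ := by
        rw [map_mul, map_mul]
    _ ≤ O.valuation (a w) * O.valuation (b w) * O.valuation χ :=
        mul_le_mul_left (mul_le_mul' hva hvb) _
    _ = O.valuation (a w * b w * χ) := by rw [map_mul, map_mul]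
    _ ≤ 1 := (O.valuation_le_one_iff _).mpr (hgen w hwV)
lemma IsIntegralOverIdeal.mono {R : Type*} [CommRing R] {I J : Ideal R} (h : I ≤ J) {t : R}
    (ht : IsIntegralOverIdeal I t) : IsIntegralOverIdeal J t := by
  obtain ⟨k, hk, c, hc, he⟩ := ht
  exact ⟨k, hk, c, fun j hj => Ideal.pow_right_mono h j (hc j hj), he⟩
set_option maxHeartbeats 2000000 in
/-- Let `K` be an infinite field, `R` a finitely generated `K`-algebra, and
`u ↦ r_u`, `u ↦ s_u` polynomial families of elements of `R`.  If `U ⊆ K^m` is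
irreducible (its vanishing ideal is prime) and `V ⊆ U` is Zariski dense in `U`,
then the ideal generated by `{r_u·s_u : u ∈ V}` and the product of the ideals
generated by `{r_u : u ∈ U}` and `{s_u : u ∈ U}` have the same integral
closure. -/
theorem integralClosure_span_prod_family {K : Type*} [Field K] [Infinite K]
    {R : Type*} [CommRing R] [Algebra K R] [Algebra.FiniteType K R] {d m : ℕ}
    (e : Fin d → R) (p q : Fin d → MvPolynomial (Fin m) K)
    (U V : Set (Fin m → K)) (hVU : V ⊆ U)
    (hU : (vanishingIdeal K U).IsPrime)
    (hdense : ∀ f : MvPolynomial (Fin m) K,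
      (∀ u ∈ V, eval u f = 0) → ∀ u ∈ U, eval u f = 0)
    (t : R) :
    IsIntegralOverIdeal
        (Ideal.span ((fun u : Fin m → K =>
          (∑ i : Fin d, eval u (p i) • e i) * ∑ i : Fin d, eval u (q i) • e i) '' V)) t ↔
      IsIntegralOverIdeal
        (Ideal.span ((fun u : Fin m → K => ∑ i : Fin d, eval u (p i) • e i) '' U) *
          Ideal.span ((fun u : Fin m → K => ∑ i : Fin d, eval u (q i) • e i) '' U)) t := by
  classical
  set r : (Fin m → K) → R := fun u : Fin m → K => ∑ i : Fin d, eval u (p i) • e i with hr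
  set s : (Fin m → K) → R := fun u : Fin m → K => ∑ i : Fin d, eval u (q i) • e i with hs
  set KI : Ideal R := Ideal.span ((fun u : Fin m → K =>
    (∑ i : Fin d, eval u (p i) • e i) * ∑ i : Fin d, eval u (q i) • e i) '' V) with hKI
  constructor
  · refine fun h1 => h1.mono (Ideal.span_le.mpr ?_)
    rintro x ⟨w, hw, rfl⟩
    exact Ideal.mul_mem_mul (Ideal.subset_span ⟨w, hVU hw, rfl⟩)
      (Ideal.subset_span ⟨w, hVU hw, rfl⟩)
  · intro h2
    obtain ⟨k, hk1, c, hc, heq⟩ := h2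
    by_cases htriv : Subsingleton R
    · refine ⟨1, le_refl 1, fun _ => 0, fun j hj => Submodule.zero_mem _, Subsingleton.elim _ _⟩
    haveI : Nontrivial R := not_subsingleton_iff_nontrivial.mp htriv
    haveI : IsNoetherianRing R := Algebra.FiniteType.isNoetherianRing K R
    set A : Subring (Polynomial R) := Subring.closure
      (Set.range (Polynomial.C : R →+* Polynomial R) ∪
        (fun w => Polynomial.C (r w * s w) * Polynomial.X) '' V) with hA
    have hcrit : ∀ Q, ∀ hQm : Q ∈ minimalPrimes (Polynomial R),
        letI : Q.IsPrime := hQm.1.1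
        ∀ O : ValuationSubring (FractionRing (Polynomial R ⧸ Q)),
        (∀ a ∈ A, algebraMap (Polynomial R ⧸ Q) (FractionRing (Polynomial R ⧸ Q))
          (Ideal.Quotient.mk Q a) ∈ O) →
        algebraMap (Polynomial R ⧸ Q) (FractionRing (Polynomial R ⧸ Q))
          (Ideal.Quotient.mk Q (Polynomial.C t * Polynomial.X)) ∈ O := by
      intro Q hQm O hO
      haveI : Q.IsPrime := hQm.1.1
      set F := FractionRing (Polynomial R ⧸ Q) with hF
      set φ : Polynomial R →+* F :=
        (algebraMap (Polynomial R ⧸ Q) F).comp (Ideal.Quotient.mk Q) with hφ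
      have hRmem : ∀ x : R, φ (Polynomial.C x) ∈ O := fun x =>
        hO _ (Subring.subset_closure (Or.inl ⟨x, rfl⟩))
      have hgenO : ∀ w ∈ V, φ (Polynomial.C (r w)) * φ (Polynomial.C (s w))
          * φ Polynomial.X ∈ O := by
        intro w hw
        have h0 := hO _ (Subring.subset_closure (Or.inr ⟨w, hw, rfl⟩))
        have h1 : φ (Polynomial.C (r w * s w) * Polynomial.X)
            = φ (Polynomial.C (r w)) * φ (Polynomial.C (s w)) * φ Polynomial.X := by
          rw [map_mul, map_mul, map_mul]
        rw [← h1]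
        exact h0
      set κ : K →+* F :=
        φ.comp ((Polynomial.C : R →+* Polynomial R).comp (algebraMap K R)) with hκdef
      have hrsplit : ∀ w, φ (Polynomial.C (r w))
          = ∑ i, κ (eval w (p i)) * φ (Polynomial.C (e i)) := by
        intro w
        have h1 : Polynomial.C (r w)
            = ∑ i, Polynomial.C (algebraMap K R (eval w (p i)) * e i) := by
          rw [show r w = ∑ i : Fin d, eval w (p i) • e i from rfl, map_sum]
          exact Finset.sum_congr rfl fun i _ => by rw [Algebra.smul_def]
        rw [h1, map_sum]
        exact Finset.sum_congr rfl fun i _ => by rw [map_mul, map_mul]; rfl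
      have hssplit : ∀ w, φ (Polynomial.C (s w))
          = ∑ i, κ (eval w (q i)) * φ (Polynomial.C (e i)) := by
        intro w
        have h1 : Polynomial.C (s w)
            = ∑ i, Polynomial.C (algebraMap K R (eval w (q i)) * e i) := by
          rw [show s w = ∑ i : Fin d, eval w (q i) • e i from rfl, map_sum]
          exact Finset.sum_congr rfl fun i _ => by rw [Algebra.smul_def]
        rw [h1, map_sum]
        exact Finset.sum_congr rfl fun i _ => by rw [map_mul, map_mul]; rfl
      have hcore : ∀ u' ∈ U, ∀ v' ∈ U,
          φ (Polynomial.C (r u')) * φ (Polynomial.C (s v')) * φ Polynomial.X ∈ O := by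
        intro u' hu' v' hv'
        have hκO : ∀ l : K, κ l ∈ O := fun l => hRmem _
        have hgenO' : ∀ w ∈ V, (∑ i, κ (eval w (p i)) * φ (Polynomial.C (e i)))
            * (∑ i, κ (eval w (q i)) * φ (Polynomial.C (e i))) * φ Polynomial.X ∈ O := by
          intro w hw
          rw [← hrsplit w, ← hssplit w]
          exact hgenO w hw
        have hfin := core_valuation_lemma p q U V hU hdense κ
          (fun i => φ (Polynomial.C (e i))) (φ Polynomial.X) O hκO hgenO' hu' hv'
        rw [hrsplit u', hssplit v']
        exact hfin
      have hIJ : ∀ x ∈ Ideal.span (r '' U) * Ideal.span (s '' U),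
          φ (Polynomial.C x) * φ Polynomial.X ∈ O := by
        intro x hx
        have main : ∀ ρ ∈ Ideal.span (r '' U), ∀ σ ∈ Ideal.span (s '' U),
            φ (Polynomial.C (ρ * σ)) * φ Polynomial.X ∈ O := by
          intro ρ hρ
          induction hρ using Submodule.span_induction with
          | mem x hxmem =>
            intro σ hσ
            induction hσ using Submodule.span_induction with
            | mem z hz =>
              obtain ⟨u', hu', rfl⟩ := hxmem
              obtain ⟨v', hv', rfl⟩ := hz
              have : φ (Polynomial.C (r u' * s v')) * φ Polynomial.X
                  = φ (Polynomial.C (r u')) * φ (Polynomial.C (s v')) * φ Polynomial.X := by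
                rw [map_mul, map_mul]
              rw [this]
              exact hcore u' hu' v' hv'
            | zero => rw [mul_zero, map_zero, map_zero, zero_mul]; exact zero_mem _
            | add y z hy hz ihy ihz =>
              have : φ (Polynomial.C (x * (y + z))) * φ Polynomial.X
                  = φ (Polynomial.C (x * y)) * φ Polynomial.X
                    + φ (Polynomial.C (x * z)) * φ Polynomial.X := by
                rw [mul_add, map_add, map_add, add_mul]
              rw [this]
              exact add_mem ihy ihz
            | smul b y hy ihy =>
              have hb : x * (b • y) = b * (x * y) := by
                rw [smul_eq_mul, mul_left_comm]
              have : φ (Polynomial.C (x * (b • y))) * φ Polynomial.X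
                  = φ (Polynomial.C b) * (φ (Polynomial.C (x * y)) * φ Polynomial.X) := by
                rw [hb, map_mul, map_mul, mul_assoc]
              rw [this]
              exact mul_mem (hRmem b) ihy
          | zero =>
            intro σ hσ
            rw [zero_mul, map_zero, map_zero, zero_mul]; exact zero_mem _
          | add y z hy hz ihy ihz =>
            intro σ hσ
            have : φ (Polynomial.C ((y + z) * σ)) * φ Polynomial.X
                = φ (Polynomial.C (y * σ)) * φ Polynomial.X
                  + φ (Polynomial.C (z * σ)) * φ Polynomial.X := by
              rw [add_mul, map_add, map_add, add_mul]
            rw [this]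
            exact add_mem (ihy σ hσ) (ihz σ hσ)
          | smul b y hy ihy =>
            intro σ hσ
            have hb : (b • y) * σ = b * (y * σ) := by
              rw [smul_eq_mul, mul_assoc]
            have : φ (Polynomial.C ((b • y) * σ)) * φ Polynomial.X
                = φ (Polynomial.C b) * (φ (Polynomial.C (y * σ)) * φ Polynomial.X) := by
              rw [hb, map_mul, map_mul, mul_assoc]
            rw [this]
            exact mul_mem (hRmem b) (ihy σ hσ)
        exact Submodule.mul_induction_on hx
          (fun ρ hρ σ hσ => main ρ hρ σ hσ)
          (fun y z ihy ihz => by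
            have : φ (Polynomial.C (y + z)) * φ Polynomial.X
                = φ (Polynomial.C y) * φ Polynomial.X + φ (Polynomial.C z) * φ Polynomial.X := by
              rw [map_add, map_add, add_mul]
            rw [this]; exact add_mem ihy ihz)
      have hpow : ∀ j, ∀ x ∈ (Ideal.span (r '' U) * Ideal.span (s '' U)) ^ j,
          φ (Polynomial.C x) * φ Polynomial.X ^ j ∈ O := by
        intro j
        induction j with
        | zero =>
          intro x hx
          rw [pow_zero, mul_one]
          exact hRmem x
        | succ j ih =>
          intro x hx
          rw [pow_succ] at hx
          refine Submodule.mul_induction_on hx ?_ ?_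
          · intro y hy z hz
            have : φ (Polynomial.C (y * z)) * φ Polynomial.X ^ (j + 1)
                = (φ (Polynomial.C y) * φ Polynomial.X ^ j)
                  * (φ (Polynomial.C z) * φ Polynomial.X) := by
              rw [map_mul, map_mul]; ring
            rw [this]
            exact mul_mem (ih y hy) (hIJ z hz)
          · intro y z ihy ihz
            have : φ (Polynomial.C (y + z)) * φ Polynomial.X ^ (j + 1)
                = φ (Polynomial.C y) * φ Polynomial.X ^ (j + 1)
                  + φ (Polynomial.C z) * φ Polynomial.X ^ (j + 1) := by
              rw [map_add, map_add, add_mul]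
            rw [this]; exact add_mem ihy ihz
      have hβ : ∀ j ∈ Finset.Icc 1 k, φ (Polynomial.C (c j)) * φ Polynomial.X ^ j ∈ O :=
        fun j hj => hpow j (c j) (hc j hj)
      have hS : (Polynomial.C t * Polynomial.X) ^ k
          + ∑ j ∈ Finset.Icc 1 k, (Polynomial.C (c j) * Polynomial.X ^ j)
            * (Polynomial.C t * Polynomial.X) ^ (k - j) = 0 := by
        have hterm : ∀ j ∈ Finset.Icc 1 k,
            (Polynomial.C (c j) * Polynomial.X ^ j) * (Polynomial.C t * Polynomial.X) ^ (k - j)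
            = Polynomial.C (c j * t ^ (k - j)) * Polynomial.X ^ k := by
          intro j hj
          have hjk : j ≤ k := (Finset.mem_Icc.mp hj).2
          have hX : (Polynomial.X : Polynomial R) ^ j * Polynomial.X ^ (k - j)
              = Polynomial.X ^ k := by
            rw [← pow_add]; congr 1; omega
          calc (Polynomial.C (c j) * Polynomial.X ^ j)
                * (Polynomial.C t * Polynomial.X) ^ (k - j)
              = Polynomial.C (c j) * Polynomial.C (t ^ (k - j))
                * (Polynomial.X ^ j * Polynomial.X ^ (k - j)) := by
                rw [mul_pow, ← Polynomial.C_pow]; ring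
            _ = Polynomial.C (c j * t ^ (k - j)) * Polynomial.X ^ k := by
                rw [hX, map_mul]
        rw [Finset.sum_congr rfl hterm, ← Finset.sum_mul, mul_pow, ← Polynomial.C_pow,
          ← add_mul, ← map_sum, ← map_add, heq, map_zero, zero_mul]
      have heqF : (φ (Polynomial.C t) * φ Polynomial.X) ^ k
          + ∑ j ∈ Finset.Icc 1 k, (φ (Polynomial.C (c j)) * φ Polynomial.X ^ j)
            * (φ (Polynomial.C t) * φ Polynomial.X) ^ (k - j) = 0 := by
        have h' := congrArg φ hS
        simpa only [map_add, map_mul, map_pow, map_sum, map_zero] using h'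
      have hfinal := mem_valuationSubring_of_monic_sum O hk1
        (fun j => φ (Polynomial.C (c j)) * φ Polynomial.X ^ j) hβ heqF
      have : φ (Polynomial.C t * Polynomial.X) ∈ O := by
        rw [map_mul]; exact hfinal
      exact this
    obtain ⟨g, hgmonic, hgcoeff, hgeval⟩ :=
      exists_monic_coeffs_mem_of_criterion A (Polynomial.C t * Polynomial.X) hcrit
    have hAgr : ∀ f ∈ A, ∀ j, f.coeff j ∈ KI ^ j := by
      have hle : A ≤ gradedCoeffs KI := by
        rw [hA]
        refine Subring.closure_le.mpr ?_
        rintro x (⟨a, rfl⟩ | ⟨w, hw, rfl⟩)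
        · refine mem_gradedCoeffs fun j => ?_
          rw [Polynomial.coeff_C]
          split
          · next hj0 => subst hj0; rw [pow_zero, Ideal.one_eq_top]; exact Submodule.mem_top
          · exact Submodule.zero_mem _
        · refine mem_gradedCoeffs fun j => ?_
          rw [Polynomial.coeff_C_mul, Polynomial.coeff_X]
          split
          · next hj1 =>
            subst hj1
            rw [mul_one, pow_one]
            exact Ideal.subset_span ⟨w, hw, rfl⟩
          · rw [mul_zero]; exact Submodule.zero_mem _
      exact fun f hf j => coeff_mem_of_mem_gradedCoeffs (hle hf) j
    set n := g.natDegree with hn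
    have hn1 : 1 ≤ n := by
      by_contra hcon
      have hn0 : n = 0 := by omega
      have hg1 : g = 1 := (Polynomial.Monic.natDegree_eq_zero hgmonic).mp hn0
      rw [hg1, Polynomial.eval_one] at hgeval
      exact one_ne_zero hgeval
    have hsum0 : ∑ i ∈ Finset.range (n + 1), (g.coeff i).coeff (n - i) * t ^ i = 0 := by
      have h1 : Polynomial.eval (Polynomial.C t * Polynomial.X) g
          = ∑ i ∈ Finset.range (n + 1), g.coeff i * (Polynomial.C (t ^ i) * Polynomial.X ^ i) := by
        rw [Polynomial.eval_eq_sum_range]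
        exact Finset.sum_congr rfl fun i _ => by rw [mul_pow, ← Polynomial.C_pow]
      have h2 : (∑ i ∈ Finset.range (n + 1),
          g.coeff i * (Polynomial.C (t ^ i) * Polynomial.X ^ i)).coeff n = 0 := by
        rw [← h1, hgeval, Polynomial.coeff_zero]
      rw [Polynomial.finset_sum_coeff] at h2
      have h3 : ∀ i ∈ Finset.range (n + 1),
          (g.coeff i * (Polynomial.C (t ^ i) * Polynomial.X ^ i)).coeff n
          = (g.coeff i).coeff (n - i) * t ^ i := by
        intro i hi
        have hin : i ≤ n := Nat.lt_succ_iff.mp (Finset.mem_range.mp hi)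
        rw [← mul_assoc, Polynomial.coeff_mul_X_pow', if_pos hin, Polynomial.coeff_mul_C]
      rw [Finset.sum_congr rfl h3] at h2
      exact h2
    rw [Finset.sum_range_succ] at hsum0
    have htop : (g.coeff n).coeff (n - n) * t ^ n = t ^ n := by
      rw [Nat.sub_self, hgmonic.coeff_natDegree]
      simp
    rw [htop] at hsum0
    refine ⟨n, hn1, fun j => (g.coeff (n - j)).coeff j, fun j hj => hAgr _ (hgcoeff (n - j)) j, ?_⟩
    have hbij : ∑ j ∈ Finset.Icc 1 n, (g.coeff (n - j)).coeff j * t ^ (n - j)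
        = ∑ i ∈ Finset.range n, (g.coeff i).coeff (n - i) * t ^ i := by
      refine Finset.sum_nbij' (fun j => n - j) (fun i => n - i) ?_ ?_ ?_ ?_ ?_
      · intro j hj
        have h' := Finset.mem_Icc.mp hj
        show n - j ∈ Finset.range n
        exact Finset.mem_range.mpr (by omega)
      · intro i hi
        have h' := Finset.mem_range.mp hi
        show n - i ∈ Finset.Icc 1 n
        exact Finset.mem_Icc.mpr (by omega)
      · intro j hj
        have h' := Finset.mem_Icc.mp hj
        show n - (n - j) = j
        omega
      · intro i hi
        have h' := Finset.mem_range.mp hi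
        show n - (n - i) = i
        omega
      · intro j hj
        have h' := Finset.mem_Icc.mp hj
        show (g.coeff (n - j)).coeff j * t ^ (n - j)
            = (g.coeff (n - j)).coeff (n - (n - j)) * t ^ (n - j)
        have h'' : n - (n - j) = j := by omega
        rw [h'']
    rw [hbij]
    rw [add_comm] at hsum0
    exact hsum0
end

section
/- Let K be an infinite field and R = K[x,y]. Then the ideal of R generated by the set {(x − u·y)(x + u·y) : u ∈ K} equals the ideal (x², y²), while the product of the ideal generated by {x − u·y : u ∈ K} and the ideal generated by {x + u·y : u ∈ K} equals (x, y)²; moreover these two ideals are different (e.g., x·y lies in (x,y)² but not in (x², y²)). -/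
open MvPolynomial

section Aux
variable {K : Type*} [Field K]

private lemma xy_not_mem :
    (X 0 * X 1 : MvPolynomial (Fin 2) K) ∉
      Ideal.span {(X 0 ^ 2 : MvPolynomial (Fin 2) K), X 1 ^ 2} := by
  rw [Ideal.mem_span_pair]
  rintro ⟨f, g, hfg⟩
  have := congrArg (coeff (Finsupp.single 0 1 + Finsupp.single 1 1)) hfg
  rw [coeff_add, X_pow_eq_monomial, X_pow_eq_monomial, coeff_mul_monomial',
    coeff_mul_monomial'] at this
  rw [if_neg, if_neg] at this
  · simp only [add_zero] at this
    have h1 : coeff (Finsupp.single 0 1 + Finsupp.single 1 1)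
        (X 0 * X 1 : MvPolynomial (Fin 2) K) = 1 := by
      rw [X, X, monomial_mul, one_mul, coeff_monomial, if_pos rfl]
    rw [h1] at this
    exact one_ne_zero this.symm
  · intro h
    have := h 1
    simp [Finsupp.single_apply] at this
  · intro h
    have := h 0
    simp [Finsupp.single_apply] at this
end Aux

/-- In `K[x,y]` over an infinite field `K`: the ideal generated by
`{(x−uy)(x+uy) : u ∈ K}` is `(x², y²)`, while the product of the ideals
generated by `{x−uy : u ∈ K}` and `{x+uy : u ∈ K}` is `(x,y)²`; these two
ideals are different, since `x·y ∈ (x,y)²` but `x·y ∉ (x², y²)`. -/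
theorem span_products_ne_product_spans {K : Type*} [Field K] [Infinite K] :
    Ideal.span (Set.range fun u : K =>
        ((X 0 - C u * X 1) * (X 0 + C u * X 1) : MvPolynomial (Fin 2) K)) =
      Ideal.span {(X 0 ^ 2 : MvPolynomial (Fin 2) K), X 1 ^ 2} ∧
    Ideal.span (Set.range fun u : K => (X 0 - C u * X 1 : MvPolynomial (Fin 2) K)) *
        Ideal.span (Set.range fun u : K => (X 0 + C u * X 1 : MvPolynomial (Fin 2) K)) =
      Ideal.span {(X 0 : MvPolynomial (Fin 2) K), X 1} ^ 2 ∧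
    Ideal.span {(X 0 ^ 2 : MvPolynomial (Fin 2) K), X 1 ^ 2} ≠
      Ideal.span {(X 0 : MvPolynomial (Fin 2) K), X 1} ^ 2 ∧
    (X 0 * X 1 : MvPolynomial (Fin 2) K) ∈
      Ideal.span {(X 0 : MvPolynomial (Fin 2) K), X 1} ^ 2 ∧
    (X 0 * X 1 : MvPolynomial (Fin 2) K) ∉
      Ideal.span {(X 0 ^ 2 : MvPolynomial (Fin 2) K), X 1 ^ 2} := by
  set I := Ideal.span (Set.range fun u : K => (X 0 - C u * X 1 : MvPolynomial (Fin 2) K))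
  set J := Ideal.span (Set.range fun u : K => (X 0 + C u * X 1 : MvPolynomial (Fin 2) K))
  have hxy_mem : (X 0 * X 1 : MvPolynomial (Fin 2) K) ∈
      Ideal.span {(X 0 : MvPolynomial (Fin 2) K), X 1} ^ 2 := by
    rw [sq]
    exact Ideal.mul_mem_mul (Ideal.subset_span (by simp)) (Ideal.subset_span (by simp))
  have hA : ∀ u v : K, (X 0 - C u * X 1) * (X 0 + C v * X 1) ∈ I * J := fun u v =>
    Ideal.mul_mem_mul (Ideal.subset_span ⟨u, rfl⟩) (Ideal.subset_span ⟨v, rfl⟩)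
  have hx2 : (X 0 ^ 2 : MvPolynomial (Fin 2) K) ∈ I * J := by
    have := hA 0 0
    simpa [sq] using this
  have hxy : (X 0 * X 1 : MvPolynomial (Fin 2) K) ∈ I * J := by
    have h := Ideal.sub_mem _ (hA 0 1) hx2
    convert h using 1
    rw [map_zero, map_one]; ring
  have hy2 : (X 1 ^ 2 : MvPolynomial (Fin 2) K) ∈ I * J := by
    have h := Ideal.sub_mem _ hx2 (hA 1 1)
    convert h using 1
    rw [map_one]; ring
  refine ⟨?_, ?_, ?_, hxy_mem, xy_not_mem⟩
  · apply le_antisymm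
    · rw [Ideal.span_le]
      rintro _ ⟨u, rfl⟩
      exact Ideal.mem_span_pair.mpr ⟨1, -(C u)^2, by ring⟩
    · rw [Ideal.span_le]
      rintro p hp
      rcases hp with rfl | rfl
      · refine Ideal.subset_span ⟨0, ?_⟩
        show (X 0 - C (0:K) * X 1) * (X 0 + C (0:K) * X 1) = X 0 ^ 2
        rw [map_zero]; ring
      · have h1 : ((X 0 - C (0:K) * X 1) * (X 0 + C (0:K) * X 1) : MvPolynomial (Fin 2) K)
            ∈ Ideal.span (Set.range fun u : K =>
              ((X 0 - C u * X 1) * (X 0 + C u * X 1) : MvPolynomial (Fin 2) K)) :=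
          Ideal.subset_span ⟨0, rfl⟩
        have h2 : ((X 0 - C (1:K) * X 1) * (X 0 + C (1:K) * X 1) : MvPolynomial (Fin 2) K)
            ∈ Ideal.span (Set.range fun u : K =>
              ((X 0 - C u * X 1) * (X 0 + C u * X 1) : MvPolynomial (Fin 2) K)) :=
          Ideal.subset_span ⟨1, rfl⟩
        have h := Ideal.sub_mem _ h1 h2
        rw [SetLike.mem_coe]
        convert h using 1
        rw [map_zero, map_one]; ring
  · apply le_antisymm
    · rw [sq]
      apply Ideal.mul_mono
      · rw [Ideal.span_le]
        rintro _ ⟨u, rfl⟩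
        exact Ideal.mem_span_pair.mpr ⟨1, -C u, by ring⟩
      · rw [Ideal.span_le]
        rintro _ ⟨u, rfl⟩
        exact Ideal.mem_span_pair.mpr ⟨1, C u, by ring⟩
    · rw [sq, Ideal.mul_le]
      intro r hr s hs
      rw [Ideal.mem_span_pair] at hr hs
      obtain ⟨a, b, rfl⟩ := hr
      obtain ⟨c, d, rfl⟩ := hs
      have e : (a * X 0 + b * X 1) * (c * X 0 + d * X 1)
          = (a * c) * X 0 ^ 2 + (a * d + b * c) * (X 0 * X 1) + (b * d) * X 1 ^ 2 := by
        ring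
      rw [e]
      exact add_mem (add_mem (Ideal.mul_mem_left _ _ hx2) (Ideal.mul_mem_left _ _ hxy))
        (Ideal.mul_mem_left _ _ hy2)
  · intro h
    exact xy_not_mem (h ▸ hxy_mem)
end

section
/- Let K be a field and let I be the ideal of K[x_1, x_2, x_3] generated by x_1³ + x_2⁵, x_1²x_3, x_1x_3², x_3³, x_2⁴x_3, x_2³x_3², x_2²x_3³, x_2x_3⁴, x_3⁵. Then the element x_2²x_3² is integral over I (indeed (x_2²x_3²)² − x_3³·(x_2⁴x_3) = 0 and x_3³·(x_2⁴x_3) ∈ I²), but x_2²x_3² ∉ I. In particular, I is not integrally closed. -/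
open MvPolynomial

lemma mono2 {K : Type*} [Field K] (a b : ℕ) :
    (X 1 ^ a * X 2 ^ b : MvPolynomial (Fin 3) K) =
      monomial (Finsupp.single 1 a + Finsupp.single 2 b) 1 := by
  simp [X_pow_eq_monomial, monomial_mul]

noncomputable def phi (K : Type*) [CommSemiring K] : MvPolynomial (Fin 3) K →+* MvPolynomial (Fin 3) K :=
  (aeval fun i : Fin 3 => if i = 0 then 0 else (X i : MvPolynomial (Fin 3) K)).toRingHom

@[simp] lemma phi_X0 {K : Type*} [CommSemiring K] : phi K (X 0) = 0 := by simp [phi]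
@[simp] lemma phi_X1 {K : Type*} [CommSemiring K] : phi K (X 1) = X 1 := by simp [phi]
@[simp] lemma phi_X2 {K : Type*} [CommSemiring K] : phi K (X 2) = X 2 := by simp [phi]

set_option maxHeartbeats 1600000 in
/-- For the ideal
`I = (x₁³+x₂⁵, x₁²x₃, x₁x₃², x₃³, x₂⁴x₃, x₂³x₃², x₂²x₃³, x₂x₃⁴, x₃⁵)` of
`K[x₁,x₂,x₃]` (here `x₁ = X 0`, `x₂ = X 1`, `x₃ = X 2`), the element `x₂²x₃²`
is integral over `I` but does not lie in `I`; in particular `I` is not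
integrally closed. -/
theorem chow_ideal_not_integrally_closed {K : Type*} [Field K] :
    IsIntegralOverIdeal
        (Ideal.span {(X 0 ^ 3 + X 1 ^ 5 : MvPolynomial (Fin 3) K),
          X 0 ^ 2 * X 2, X 0 * X 2 ^ 2, X 2 ^ 3,
          X 1 ^ 4 * X 2, X 1 ^ 3 * X 2 ^ 2, X 1 ^ 2 * X 2 ^ 3, X 1 * X 2 ^ 4, X 2 ^ 5})
        (X 1 ^ 2 * X 2 ^ 2) ∧
      (X 1 ^ 2 * X 2 ^ 2 : MvPolynomial (Fin 3) K) ∉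
        Ideal.span {(X 0 ^ 3 + X 1 ^ 5 : MvPolynomial (Fin 3) K),
          X 0 ^ 2 * X 2, X 0 * X 2 ^ 2, X 2 ^ 3,
          X 1 ^ 4 * X 2, X 1 ^ 3 * X 2 ^ 2, X 1 ^ 2 * X 2 ^ 3, X 1 * X 2 ^ 4, X 2 ^ 5} ∧
      ¬ (∀ r : MvPolynomial (Fin 3) K,
          IsIntegralOverIdeal
            (Ideal.span {(X 0 ^ 3 + X 1 ^ 5 : MvPolynomial (Fin 3) K),
              X 0 ^ 2 * X 2, X 0 * X 2 ^ 2, X 2 ^ 3,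
              X 1 ^ 4 * X 2, X 1 ^ 3 * X 2 ^ 2, X 1 ^ 2 * X 2 ^ 3, X 1 * X 2 ^ 4, X 2 ^ 5}) r →
          r ∈ Ideal.span {(X 0 ^ 3 + X 1 ^ 5 : MvPolynomial (Fin 3) K),
              X 0 ^ 2 * X 2, X 0 * X 2 ^ 2, X 2 ^ 3,
              X 1 ^ 4 * X 2, X 1 ^ 3 * X 2 ^ 2, X 1 ^ 2 * X 2 ^ 3, X 1 * X 2 ^ 4, X 2 ^ 5}) := by
  classical
  set S : Set (MvPolynomial (Fin 3) K) :=
    {(X 0 ^ 3 + X 1 ^ 5 : MvPolynomial (Fin 3) K),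
      X 0 ^ 2 * X 2, X 0 * X 2 ^ 2, X 2 ^ 3,
      X 1 ^ 4 * X 2, X 1 ^ 3 * X 2 ^ 2, X 1 ^ 2 * X 2 ^ 3, X 1 * X 2 ^ 4, X 2 ^ 5} with hS
  have hint : IsIntegralOverIdeal (Ideal.span S) (X 1 ^ 2 * X 2 ^ 2) := by
    refine ⟨2, one_le_two,
      fun j => if j = 2 then -(X 2 ^ 3 * (X 1 ^ 4 * X 2)) else 0, ?_, ?_⟩
    · intro j hj
      simp only [Finset.mem_Icc] at hj
      obtain ⟨hj1, hj2⟩ := hj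
      interval_cases j
      · simp
      · simp only [if_pos rfl]
        rw [pow_two]
        exact neg_mem (Ideal.mul_mem_mul
          (Ideal.subset_span (by rw [hS]; simp))
          (Ideal.subset_span (by rw [hS]; simp)))
    · rw [show Finset.Icc 1 2 = {1, 2} from rfl]
      rw [Finset.sum_insert (by decide), Finset.sum_singleton]
      norm_num
      ring
  -- the monomial exponent set for the image ideal under x₁ ↦ 0
  set P : Set (ℕ × ℕ) := {(5,0),(0,3),(4,1),(3,2),(2,3),(1,4),(0,5)} with hP
  set T : Set (Fin 3 →₀ ℕ) :=
    (fun p : ℕ × ℕ => Finsupp.single (1 : Fin 3) p.1 + Finsupp.single 2 p.2) '' P with hT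
  set J : Ideal (MvPolynomial (Fin 3) K) :=
    Ideal.span ((fun s => monomial s (1 : K)) '' T) with hJ
  have memJ : ∀ a b : ℕ, (a, b) ∈ P → (X 1 ^ a * X 2 ^ b : MvPolynomial (Fin 3) K) ∈ J := by
    intro a b hab
    rw [mono2]
    exact Ideal.subset_span ⟨_, ⟨(a, b), hab, rfl⟩, rfl⟩
  have hgen : ∀ g ∈ S, phi K g ∈ J := by
    rw [hS]
    intro g hg
    simp only [Set.mem_insert_iff, Set.mem_singleton_iff] at hg
    rcases hg with rfl|rfl|rfl|rfl|rfl|rfl|rfl|rfl|rfl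
    · rw [map_add, map_pow, map_pow, phi_X0, phi_X1, zero_pow three_ne_zero, zero_add]
      have h := memJ 5 0 (by rw [hP]; simp)
      rwa [pow_zero, mul_one] at h
    · rw [map_mul, map_pow, phi_X0, zero_pow two_ne_zero, zero_mul]
      exact zero_mem J
    · rw [map_mul, map_pow, phi_X0, zero_mul]
      exact zero_mem J
    · rw [map_pow, phi_X2]
      have h := memJ 0 3 (by rw [hP]; simp)
      rwa [pow_zero, one_mul] at h
    · rw [map_mul, map_pow, phi_X1, phi_X2]
      have h := memJ 4 1 (by rw [hP]; simp)
      rwa [pow_one] at h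
    · rw [map_mul, map_pow, map_pow, phi_X1, phi_X2]
      exact memJ 3 2 (by rw [hP]; simp)
    · rw [map_mul, map_pow, map_pow, phi_X1, phi_X2]
      exact memJ 2 3 (by rw [hP]; simp)
    · rw [map_mul, map_pow, phi_X1, phi_X2]
      have h := memJ 1 4 (by rw [hP]; simp)
      rwa [pow_one] at h
    · rw [map_pow, phi_X2]
      have h := memJ 0 5 (by rw [hP]; simp)
      rwa [pow_zero, one_mul] at h
  have hnot : (X 1 ^ 2 * X 2 ^ 2 : MvPolynomial (Fin 3) K) ∉ Ideal.span S := by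
    intro hmem
    have hle : Ideal.span S ≤ J.comap (phi K) := Ideal.span_le.2 hgen
    have h3 : (X 1 ^ 2 * X 2 ^ 2 : MvPolynomial (Fin 3) K) ∈ J := by
      have := hle hmem
      rw [Ideal.mem_comap, map_mul, map_pow, map_pow, phi_X1, phi_X2] at this
      exact this
    rw [hJ, mem_ideal_span_monomial_image] at h3
    have hsupp : (X 1 ^ 2 * X 2 ^ 2 : MvPolynomial (Fin 3) K).support =
        {Finsupp.single 1 2 + Finsupp.single 2 2} := by
      rw [mono2, support_monomial, if_neg one_ne_zero]
    rw [hsupp] at h3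
    obtain ⟨s, hs, hle'⟩ := h3 _ (Finset.mem_singleton_self _)
    rw [hT] at hs
    obtain ⟨⟨a, b⟩, hab, rfl⟩ := hs
    have ha : a ≤ 2 := by
      have := hle' 1
      simpa [Finsupp.single_apply] using this
    have hb : b ≤ 2 := by
      have := hle' 2
      simpa [Finsupp.single_apply] using this
    rw [hP] at hab
    simp only [Set.mem_insert_iff, Set.mem_singleton_iff, Prod.mk.injEq] at hab
    omega
  exact ⟨hint, hnot, fun h => hnot (h _ hint)⟩
end

section
/- Let K be a field, m ≥ 1 an integer, and R = K[x,y]. Then the integral closure of the ideal (x^m, y^m) in R is exactly the ideal (x, y)^m; that is, an element of R is integral over (x^m, y^m) if and only if it lies in (x, y)^m. -/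
open MvPolynomial

namespace IntClosAux

variable {K : Type*} [Field K]

/-- The map `K[x,y] → K[x,y][t]` sending `X i ↦ t • X i`. -/
noncomputable def Φ : MvPolynomial (Fin 2) K →ₐ[K] Polynomial (MvPolynomial (Fin 2) K) :=
  aeval (fun i => Polynomial.X * Polynomial.C (X i))

lemma fin2_sum_single (d : Fin 2 →₀ ℕ) :
    Finsupp.single (0 : Fin 2) (d 0) + Finsupp.single 1 (d 1) = d := by
  ext i; fin_cases i <;> simp [Finsupp.single_apply]

lemma monomial_eq2 (d : Fin 2 →₀ ℕ) (c : K) :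
    monomial d c = C c * X 0 ^ d 0 * X 1 ^ d 1 := by
  rw [X_pow_eq_monomial, X_pow_eq_monomial, mul_assoc, monomial_mul, C_mul_monomial,
    fin2_sum_single, mul_one, mul_one]

lemma mono_mem {n : ℕ} {d : Fin 2 →₀ ℕ} (h : n ≤ d 0 + d 1) (c : K) :
    monomial d c ∈ (Ideal.span {(X 0 : MvPolynomial (Fin 2) K), X 1}) ^ n := by
  apply Ideal.pow_le_pow_right h
  have h0 : (X 0 : MvPolynomial (Fin 2) K) ∈ Ideal.span {X 0, X 1} :=
    Ideal.subset_span (by simp)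
  have h1 : (X 1 : MvPolynomial (Fin 2) K) ∈ Ideal.span {X 0, X 1} :=
    Ideal.subset_span (by simp)
  rw [monomial_eq2, mul_assoc, pow_add]
  exact Ideal.mul_mem_left _ _
    (Ideal.mul_mem_mul (Ideal.pow_mem_pow h0 _) (Ideal.pow_mem_pow h1 _))

lemma deg_one {s : MvPolynomial (Fin 2) K}
    (hs : s ∈ Ideal.span {(X 0 : MvPolynomial (Fin 2) K), X 1}) :
    ∀ e ∈ s.support, 1 ≤ e 0 + e 1 := by
  classical
  rw [Ideal.mem_span_pair] at hs
  obtain ⟨a, b, rfl⟩ := hs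
  intro e he
  rcases Finset.mem_union.mp (MvPolynomial.support_add he) with h | h
  · obtain ⟨u, hu, v, hv, rfl⟩ := Finset.mem_add.mp (MvPolynomial.support_mul _ _ h)
    rw [MvPolynomial.support_X] at hv
    simp only [Finset.mem_singleton] at hv
    subst hv
    simp [Finsupp.single_apply]
    omega
  · obtain ⟨u, hu, v, hv, rfl⟩ := Finset.mem_add.mp (MvPolynomial.support_mul _ _ h)
    rw [MvPolynomial.support_X] at hv
    simp only [Finset.mem_singleton] at hv
    subst hv
    simp [Finsupp.single_apply]
    omega

lemma supp_deg {n : ℕ} {g : MvPolynomial (Fin 2) K}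
    (hg : g ∈ (Ideal.span {(X 0 : MvPolynomial (Fin 2) K), X 1}) ^ n) :
    ∀ d ∈ g.support, n ≤ d 0 + d 1 := by
  classical
  induction n generalizing g with
  | zero => intro d _; omega
  | succ n ih =>
    rw [pow_succ] at hg
    refine Submodule.mul_induction_on hg ?_ ?_
    · intro a ha s hs d hd
      obtain ⟨u, hu, v, hv, rfl⟩ := Finset.mem_add.mp (MvPolynomial.support_mul _ _ hd)
      have h1 := ih ha u hu
      have h2 := deg_one hs v hv
      simp only [Finsupp.add_apply]
      omega
    · intro x y hx hy d hd
      rcases Finset.mem_union.mp (MvPolynomial.support_add hd) with h | h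
      exacts [hx d h, hy d h]

lemma mem_of_deg {n : ℕ} {g : MvPolynomial (Fin 2) K}
    (h : ∀ d ∈ g.support, n ≤ d 0 + d 1) :
    g ∈ (Ideal.span {(X 0 : MvPolynomial (Fin 2) K), X 1}) ^ n := by
  rw [g.as_sum]
  exact Ideal.sum_mem _ fun d hd => mono_mem (h d hd) _


lemma phi_monomial (d : Fin 2 →₀ ℕ) (c : K) :
    Φ (monomial d c) = Polynomial.C (monomial d c) * Polynomial.X ^ (d 0 + d 1) := by
  rw [monomial_eq2, Φ]
  simp only [map_mul, map_pow, aeval_X, aeval_C, Polynomial.algebraMap_apply,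
    MvPolynomial.algebraMap_eq, mul_pow, pow_add]
  ring

lemma phi_coeff (g : MvPolynomial (Fin 2) K) (n : ℕ) :
    (Φ g).coeff n =
      ∑ d ∈ g.support, if d 0 + d 1 = n then monomial d (coeff d g) else 0 := by
  conv_lhs => rw [g.as_sum, map_sum]
  rw [Polynomial.finset_sum_coeff]
  refine Finset.sum_congr rfl fun d _ => ?_
  rw [phi_monomial, Polynomial.coeff_C_mul, Polynomial.coeff_X_pow]
  rcases eq_or_ne (d 0 + d 1) n with h | h
  · simp [h]
  · simp [h, Ne.symm h]

lemma phi_coeff_coeff (g : MvPolynomial (Fin 2) K) (d : Fin 2 →₀ ℕ) :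
    MvPolynomial.coeff d ((Φ g).coeff (d 0 + d 1)) = coeff d g := by
  classical
  rw [phi_coeff, MvPolynomial.coeff_sum]
  rw [Finset.sum_eq_single d]
  · simp [MvPolynomial.coeff_monomial]
  · intro b _ hbd
    split_ifs <;> simp [MvPolynomial.coeff_monomial, hbd]
  · intro hd
    simp [MvPolynomial.coeff_monomial, MvPolynomial.notMem_support_iff.mp hd]

lemma le_trailing {n : ℕ} {g : MvPolynomial (Fin 2) K}
    (h : ∀ d ∈ g.support, n ≤ d 0 + d 1) : (n : ℕ∞) ≤ (Φ g).trailingDegree := by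
  by_contra hc
  push_neg at hc
  have hg0 : Φ g ≠ 0 := by
    intro h0
    rw [h0, Polynomial.trailingDegree_zero] at hc
    exact (not_top_lt hc).elim
  rw [Polynomial.trailingDegree_eq_natTrailingDegree hg0, Nat.cast_lt] at hc
  apply Polynomial.coeff_natTrailingDegree_ne_zero.mpr hg0
  rw [phi_coeff]
  refine Finset.sum_eq_zero fun d hd => ?_
  have := h d hd
  rw [if_neg]
  omega

lemma ntd_pow {R' : Type*} [CommRing R'] [IsDomain R'] {p : Polynomial R'} (hp : p ≠ 0) (k : ℕ) :
    (p ^ k).natTrailingDegree = k * p.natTrailingDegree := by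
  induction k with
  | zero => simp
  | succ k ih =>
    rw [pow_succ, Polynomial.natTrailingDegree_mul (pow_ne_zero k hp) hp, ih]
    ring


lemma I_pow_le (m j : ℕ) :
    (Ideal.span {(X 0 ^ m : MvPolynomial (Fin 2) K), X 1 ^ m}) ^ j ≤
      (Ideal.span {(X 0 : MvPolynomial (Fin 2) K), X 1}) ^ (m * j) := by
  have h : Ideal.span {(X 0 ^ m : MvPolynomial (Fin 2) K), X 1 ^ m} ≤
      (Ideal.span {(X 0 : MvPolynomial (Fin 2) K), X 1}) ^ m := by
    rw [Ideal.span_le]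
    rintro g (rfl | rfl)
    · exact Ideal.pow_mem_pow (Ideal.subset_span (by simp)) m
    · exact Ideal.pow_mem_pow (Ideal.subset_span (by simp)) m
  calc (Ideal.span {(X 0 ^ m : MvPolynomial (Fin 2) K), X 1 ^ m}) ^ j
      ≤ ((Ideal.span {(X 0 : MvPolynomial (Fin 2) K), X 1}) ^ m) ^ j :=
        Ideal.pow_right_mono h j
    _ = _ := by rw [← pow_mul]

lemma forward {m : ℕ} (hm : 1 ≤ m) {f : MvPolynomial (Fin 2) K}
    (hint : ∃ k : ℕ, 1 ≤ k ∧ ∃ c : ℕ → MvPolynomial (Fin 2) K,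
      (∀ j ∈ Finset.Icc 1 k, c j ∈ (Ideal.span {(X 0 ^ m : MvPolynomial (Fin 2) K), X 1 ^ m}) ^ j) ∧
      f ^ k + ∑ j ∈ Finset.Icc 1 k, c j * f ^ (k - j) = 0) :
    f ∈ Ideal.span {(X 0 : MvPolynomial (Fin 2) K), X 1} ^ m := by
  obtain ⟨k, hk1, c, hc, heq⟩ := hint
  by_contra hfJ
  have hbad : ¬ ∀ d ∈ f.support, m ≤ d 0 + d 1 := fun h => hfJ (mem_of_deg h)
  push_neg at hbad
  obtain ⟨d, hd, hdm⟩ := hbad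
  have hcoefne : (Φ f).coeff (d 0 + d 1) ≠ 0 := by
    intro h0
    have h1 := phi_coeff_coeff f d
    rw [h0, MvPolynomial.coeff_zero] at h1
    exact MvPolynomial.mem_support_iff.mp hd h1.symm
  have hΦf : Φ f ≠ 0 := fun h => hcoefne (by simp [h])
  set t := (Φ f).natTrailingDegree with ht
  have htm : t < m := by
    have := Polynomial.natTrailingDegree_le_of_ne_zero hcoefne
    omega
  have heq2 : (Φ f) ^ k + ∑ j ∈ Finset.Icc 1 k, Φ (c j) * (Φ f) ^ (k - j) = 0 := by
    have h2 := congrArg Φ heq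
    simpa [map_add, map_pow, map_sum, map_mul] using h2
  have hterm : ∀ j ∈ Finset.Icc 1 k, (Φ (c j) * (Φ f) ^ (k - j)).coeff (k * t) = 0 := by
    intro j hj
    obtain ⟨hj1, hjk⟩ := Finset.mem_Icc.mp hj
    apply Polynomial.coeff_eq_zero_of_lt_trailingDegree
    rw [Polynomial.trailingDegree_mul]
    have h1 : ((m * j : ℕ) : ℕ∞) ≤ (Φ (c j)).trailingDegree :=
      le_trailing (supp_deg (I_pow_le m j (hc j hj)))
    have h2 : ((Φ f) ^ (k - j)).trailingDegree = (((k - j) * t : ℕ) : ℕ∞) := by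
      rw [Polynomial.trailingDegree_eq_natTrailingDegree (pow_ne_zero _ hΦf), ntd_pow hΦf]
    rw [h2]
    calc ((k * t : ℕ) : ℕ∞) < ((m * j + (k - j) * t : ℕ) : ℕ∞) := by
          rw [Nat.cast_lt]
          have hx : k * t = j * t + (k - j) * t := by
            rw [← add_mul]; congr 1; omega
          have hy : j * t < m * j := by
            have h5 : j * t < j * m := by
              apply Nat.mul_lt_mul_of_le_of_lt (le_refl j) htm (by omega)
            nlinarith
          omega
      _ ≤ (Φ (c j)).trailingDegree + (((k - j) * t : ℕ) : ℕ∞) := by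
          rw [Nat.cast_add]
          exact add_le_add_left h1 _
  have hsum : ((Φ f) ^ k).coeff (k * t) = 0 := by
    have h3 : ((Φ f) ^ k).coeff (k * t)
        + ∑ j ∈ Finset.Icc 1 k, (Φ (c j) * (Φ f) ^ (k - j)).coeff (k * t) = 0 := by
      rw [← Polynomial.finset_sum_coeff, ← Polynomial.coeff_add, heq2, Polynomial.coeff_zero]
    rw [Finset.sum_eq_zero hterm, add_zero] at h3
    exact h3
  have hne : ((Φ f) ^ k).coeff (k * t) ≠ 0 := by
    have h4 : ((Φ f) ^ k).natTrailingDegree = k * t := ntd_pow hΦf k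
    rw [← h4]
    exact Polynomial.coeff_natTrailingDegree_ne_zero.mpr (pow_ne_zero _ hΦf)
  exact hne hsum


lemma J_mul_J_le (m : ℕ) (hm : 1 ≤ m) :
    (Ideal.span {(X 0 : MvPolynomial (Fin 2) K), X 1}) ^ m *
        (Ideal.span {(X 0 : MvPolynomial (Fin 2) K), X 1}) ^ m ≤
      Ideal.span {(X 0 ^ m : MvPolynomial (Fin 2) K), X 1 ^ m} *
        (Ideal.span {(X 0 : MvPolynomial (Fin 2) K), X 1}) ^ m := by
  intro g hg
  rw [← pow_add] at hg
  have hdeg := supp_deg hg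
  rw [g.as_sum]
  refine Ideal.sum_mem _ fun d hd => ?_
  have hdm := hdeg d hd
  rcases le_or_gt m (d 0) with h0 | h0
  · have hle : Finsupp.single (0 : Fin 2) m ≤ d := by
      rw [Finsupp.le_def]
      intro i
      fin_cases i <;> simp [Finsupp.single_apply] <;> omega
    have hmono : monomial d (coeff d g)
        = X 0 ^ m * monomial (d - Finsupp.single (0 : Fin 2) m) (coeff d g) := by
      rw [X_pow_eq_monomial, monomial_mul, one_mul, add_tsub_cancel_of_le hle]
    rw [hmono]
    refine Ideal.mul_mem_mul (Ideal.subset_span (by simp)) (mono_mem ?_ _)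
    have e0 : (d - Finsupp.single (0 : Fin 2) m) 0 = d 0 - m := by
      simp [Finsupp.tsub_apply, Finsupp.single_apply]
    have e1 : (d - Finsupp.single (0 : Fin 2) m) 1 = d 1 := by
      simp [Finsupp.tsub_apply, Finsupp.single_apply]
    omega
  · have h1 : m ≤ d 1 := by omega
    have hle : Finsupp.single (1 : Fin 2) m ≤ d := by
      rw [Finsupp.le_def]
      intro i
      fin_cases i <;> simp [Finsupp.single_apply] <;> omega
    have hmono : monomial d (coeff d g)
        = X 1 ^ m * monomial (d - Finsupp.single (1 : Fin 2) m) (coeff d g) := by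
      rw [X_pow_eq_monomial, monomial_mul, one_mul, add_tsub_cancel_of_le hle]
    rw [hmono]
    refine Ideal.mul_mem_mul (Ideal.subset_span (by simp)) (mono_mem ?_ _)
    have e0 : (d - Finsupp.single (1 : Fin 2) m) 0 = d 0 := by
      simp [Finsupp.tsub_apply, Finsupp.single_apply]
    have e1 : (d - Finsupp.single (1 : Fin 2) m) 1 = d 1 - m := by
      simp [Finsupp.tsub_apply, Finsupp.single_apply]
    omega

lemma reverse {m : ℕ} (hm : 1 ≤ m) {f : MvPolynomial (Fin 2) K}
    (hfJ : f ∈ Ideal.span {(X 0 : MvPolynomial (Fin 2) K), X 1} ^ m) :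
    ∃ k : ℕ, 1 ≤ k ∧ ∃ c : ℕ → MvPolynomial (Fin 2) K,
      (∀ j ∈ Finset.Icc 1 k, c j ∈ (Ideal.span {(X 0 ^ m : MvPolynomial (Fin 2) K), X 1 ^ m}) ^ j) ∧
      f ^ k + ∑ j ∈ Finset.Icc 1 k, c j * f ^ (k - j) = 0 := by
  classical
  haveI : Module.Finite (MvPolynomial (Fin 2) K)
      ↥(Ideal.span {(X 0 : MvPolynomial (Fin 2) K), X 1} ^ m) :=
    Module.Finite.iff_fg.mpr ((Submodule.fg_span (Set.toFinite _)).pow m)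
  let e : Module.End (MvPolynomial (Fin 2) K)
      ↥(Ideal.span {(X 0 : MvPolynomial (Fin 2) K), X 1} ^ m) :=
    Algebra.lsmul (MvPolynomial (Fin 2) K) (MvPolynomial (Fin 2) K) _ f
  have hrange : LinearMap.range e ≤
      (Ideal.span {(X 0 ^ m : MvPolynomial (Fin 2) K), X 1 ^ m}) • ⊤ := by
    rintro _ ⟨x, rfl⟩
    rw [Submodule.mem_smul_top_iff, Ideal.smul_eq_mul]
    have hco : (e x : MvPolynomial (Fin 2) K) = f * (x : MvPolynomial (Fin 2) K) := rfl
    rw [hco]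
    exact J_mul_J_le m hm (Ideal.mul_mem_mul hfJ x.2)
  obtain ⟨p, hmonic, -, hcoeff, haeval⟩ :=
    LinearMap.exists_monic_and_coeff_mem_pow_and_aeval_eq_zero_of_range_le_smul
      (MvPolynomial (Fin 2) K) e
      (Ideal.span {(X 0 ^ m : MvPolynomial (Fin 2) K), X 1 ^ m}) hrange
  have hev : Polynomial.eval f p = 0 := by
    have h1 : Algebra.lsmul (MvPolynomial (Fin 2) K) (MvPolynomial (Fin 2) K)
        ↥(Ideal.span {(X 0 : MvPolynomial (Fin 2) K), X 1} ^ m) (Polynomial.aeval f p) = 0 := by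
      rw [← Polynomial.aeval_algHom_apply]
      exact haeval
    have hx : (X 0 : MvPolynomial (Fin 2) K) ^ m ∈
        Ideal.span {(X 0 : MvPolynomial (Fin 2) K), X 1} ^ m :=
      Ideal.pow_mem_pow (Ideal.subset_span (by simp)) m
    have h2 := congrArg (fun (ψ : Module.End (MvPolynomial (Fin 2) K)
        ↥(Ideal.span {(X 0 : MvPolynomial (Fin 2) K), X 1} ^ m)) =>
        (ψ ⟨X 0 ^ m, hx⟩ : MvPolynomial (Fin 2) K)) h1
    simp only [Algebra.lsmul_coe, LinearMap.zero_apply, ZeroMemClass.coe_zero,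
      SetLike.val_smul, smul_eq_mul] at h2
    have h4 : (X 0 : MvPolynomial (Fin 2) K) ^ m ≠ 0 :=
      pow_ne_zero _ (MvPolynomial.X_ne_zero 0)
    rcases mul_eq_zero.mp h2 with h5 | h5
    · rwa [← Polynomial.coe_aeval_eq_eval]
    · exact absurd h5 h4
  have hk0 : 1 ≤ p.natDegree := by
    by_contra hk
    have h0 : p.natDegree = 0 := by omega
    rw [hmonic.natDegree_eq_zero] at h0
    rw [h0, Polynomial.eval_one] at hev
    exact one_ne_zero hev
  refine ⟨p.natDegree, hk0, fun j => p.coeff (p.natDegree - j), fun j hj => ?_, ?_⟩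
  · obtain ⟨hj1, hjk⟩ := Finset.mem_Icc.mp hj
    have := hcoeff (p.natDegree - j)
    rwa [show p.natDegree - (p.natDegree - j) = j by omega] at this
  · rw [← hev, Polynomial.eval_eq_sum_range, Finset.sum_range_succ, hmonic.coeff_natDegree,
      one_mul, add_comm]
    congr 1
    refine Finset.sum_nbij' (fun j => p.natDegree - j) (fun i => p.natDegree - i)
      ?_ ?_ ?_ ?_ ?_
    · intro a ha
      simp only [Finset.mem_Icc, Finset.mem_range] at ha ⊢
      omega
    · intro a ha
      simp only [Finset.mem_Icc, Finset.mem_range] at ha ⊢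
      omega
    · intro a ha
      simp only [Finset.mem_Icc] at ha
      omega
    · intro a ha
      simp only [Finset.mem_range] at ha
      omega
    · intro a _
      rfl


end IntClosAux

/-- In `K[x,y]`, the integral closure of `(x^m, y^m)` is exactly `(x, y)^m`:
an element is integral over `(x^m, y^m)` iff it lies in `(x, y)^m`. -/
theorem integralClosure_pow_monomial_ideal {K : Type*} [Field K] (m : ℕ)
    (hm : 1 ≤ m) (f : MvPolynomial (Fin 2) K) :
    IsIntegralOverIdeal
        (Ideal.span {(X 0 ^ m : MvPolynomial (Fin 2) K), X 1 ^ m}) f ↔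
      f ∈ Ideal.span {(X 0 : MvPolynomial (Fin 2) K), X 1} ^ m := by
  constructor
  · intro h
    exact IntClosAux.forward hm h
  · intro h
    exact IntClosAux.reverse hm h
end

section
/- Let K be a field, n ≥ 3 an odd integer, and in K[x,y,z,s] let I_n be the ideal generated by x² − y^n, z² − y s², z^n − x s^n, x z − y s^{(n+1)/2}, x s − y^{(n−1)/2} z; let J_n = (x² − y^n, z, s) and let 𝔪 = (x, y, z, s). Then J_n² ⊆ I_n + (s) and 𝔪^{(n−1)/2}·J_n ⊆ I_n + (s). -/
open MvPolynomial

/-- Abstract key lemma: in a commutative ring, given the relevant membership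
facts in an ideal `T`, we get both inclusions. -/
theorem key_aux {R : Type*} [CommRing R] (x y z s f : R) (m : ℕ) (T : Ideal R)
    (hf : f ∈ T) (hs : s ∈ T) (hz2 : z * z ∈ T) (hxz : x * z ∈ T)
    (hyz : y ^ m * z ∈ T) (hfz : f * z ∈ T) :
    (Ideal.span {f, z, s}) ^ 2 ≤ T ∧
      (Ideal.span {x, y, z, s}) ^ m * Ideal.span {f, z, s} ≤ T := by
  have hJ : Ideal.span {f, z, s} =
      Ideal.span {f} ⊔ (Ideal.span {z} ⊔ Ideal.span {s}) := by
    rw [Ideal.span_insert, Ideal.span_insert]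
  have hM : Ideal.span {x, y, z, s} =
      Ideal.span {x} ⊔ (Ideal.span {y} ⊔ (Ideal.span {z} ⊔ Ideal.span {s})) := by
    rw [Ideal.span_insert, Ideal.span_insert, Ideal.span_insert]
  constructor
  · rw [hJ, pow_two]
    simp only [Ideal.sup_mul, Ideal.mul_sup, Ideal.span_singleton_mul_span_singleton,
      sup_le_iff, Ideal.span_singleton_le_iff_mem]
    and_intros <;>
      first
        | exact T.mul_mem_left _ hf
        | exact T.mul_mem_left _ hs
        | exact T.mul_mem_right _ hf
        | exact T.mul_mem_right _ hs
        | exact hfz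
        | exact hz2
        | (rw [mul_comm]; exact hfz)
  · have claim : ∀ j : ℕ, (Ideal.span {x, y, z, s}) ^ j * Ideal.span {z} ≤
        T ⊔ Ideal.span {y ^ j * z} := by
      intro j
      induction j with
      | zero =>
        simp only [pow_zero, one_mul]
        exact le_sup_right
      | succ j ih =>
        calc (Ideal.span {x, y, z, s}) ^ (j + 1) * Ideal.span {z}
            = Ideal.span {x, y, z, s} * ((Ideal.span {x, y, z, s}) ^ j *
              Ideal.span {z}) := by rw [pow_succ']; ring
          _ ≤ Ideal.span {x, y, z, s} * (T ⊔ Ideal.span {y ^ j * z}) :=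
              Ideal.mul_mono_right ih
          _ = Ideal.span {x, y, z, s} * T ⊔
              Ideal.span {x, y, z, s} * Ideal.span {y ^ j * z} :=
              Ideal.mul_sup _ _ _
          _ ≤ T ⊔ Ideal.span {y ^ (j + 1) * z} := by
              refine sup_le (le_trans Ideal.mul_le_right le_sup_left) ?_
              rw [hM]
              simp only [Ideal.sup_mul, Ideal.span_singleton_mul_span_singleton,
                sup_le_iff, Ideal.span_singleton_le_iff_mem]
              refine ⟨Submodule.mem_sup_left ?_,
                Submodule.mem_sup_right (Ideal.subset_span ?_),
                Submodule.mem_sup_left ?_, Submodule.mem_sup_left ?_⟩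
              · have h : x * (y ^ j * z) = y ^ j * (x * z) := by ring
                exact h ▸ T.mul_mem_left _ hxz
              · have h : y * (y ^ j * z) = y ^ (j + 1) * z := by ring
                exact h ▸ rfl
              · have h : z * (y ^ j * z) = y ^ j * (z * z) := by ring
                exact h ▸ T.mul_mem_left _ hz2
              · exact T.mul_mem_right _ hs
    rw [hJ, Ideal.mul_sup, Ideal.mul_sup]
    refine sup_le (le_trans Ideal.mul_le_right
      ((Ideal.span_singleton_le_iff_mem T).mpr hf)) (sup_le ?_ ?_)
    · exact le_trans (claim m)
        (sup_le le_rfl ((Ideal.span_singleton_le_iff_mem T).mpr hyz))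
    · exact le_trans Ideal.mul_le_right ((Ideal.span_singleton_le_iff_mem T).mpr hs)

/-- In `K[x,y,z,s]` (with `x = X 0`, `y = X 1`, `z = X 2`, `s = X 3`), for odd
`n ≥ 3`, with `Iₙ = (x²−yⁿ, z²−ys², zⁿ−xsⁿ, xz−ys^((n+1)/2), xs−y^((n−1)/2)z)`,
`Jₙ = (x²−yⁿ, z, s)` and `𝔪 = (x,y,z,s)`, one has `Jₙ² ⊆ Iₙ + (s)` and
`𝔪^((n−1)/2)·Jₙ ⊆ Iₙ + (s)`. -/
theorem Jn_sq_and_m_Jn_subset {K : Type*} [Field K] (n : ℕ) (hn3 : 3 ≤ n)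
    (hodd : Odd n) :
    (Ideal.span {(X 0 ^ 2 - X 1 ^ n : MvPolynomial (Fin 4) K), X 2, X 3}) ^ 2 ≤
      (Ideal.span {(X 0 ^ 2 - X 1 ^ n : MvPolynomial (Fin 4) K),
          X 2 ^ 2 - X 1 * X 3 ^ 2, X 2 ^ n - X 0 * X 3 ^ n,
          X 0 * X 2 - X 1 * X 3 ^ ((n + 1) / 2),
          X 0 * X 3 - X 1 ^ ((n - 1) / 2) * X 2}) +
        Ideal.span {(X 3 : MvPolynomial (Fin 4) K)} ∧
    (Ideal.span {(X 0 : MvPolynomial (Fin 4) K), X 1, X 2, X 3}) ^ ((n - 1) / 2) *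
        Ideal.span {(X 0 ^ 2 - X 1 ^ n : MvPolynomial (Fin 4) K), X 2, X 3} ≤
      (Ideal.span {(X 0 ^ 2 - X 1 ^ n : MvPolynomial (Fin 4) K),
          X 2 ^ 2 - X 1 * X 3 ^ 2, X 2 ^ n - X 0 * X 3 ^ n,
          X 0 * X 2 - X 1 * X 3 ^ ((n + 1) / 2),
          X 0 * X 3 - X 1 ^ ((n - 1) / 2) * X 2}) +
        Ideal.span {(X 3 : MvPolynomial (Fin 4) K)} := by
  obtain ⟨m, hm⟩ := hodd
  subst hm
  have hm1 : 1 ≤ m := by omega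
  have e1 : (2 * m + 1 + 1) / 2 = m + 1 := by omega
  have e2 : (2 * m + 1 - 1) / 2 = m := by omega
  rw [e1, e2]
  set f : MvPolynomial (Fin 4) K := X 0 ^ 2 - X 1 ^ (2 * m + 1) with hfdef
  set g2 : MvPolynomial (Fin 4) K := X 2 ^ 2 - X 1 * X 3 ^ 2 with hg2def
  set g3 : MvPolynomial (Fin 4) K := X 2 ^ (2 * m + 1) - X 0 * X 3 ^ (2 * m + 1)
    with hg3def
  set g4 : MvPolynomial (Fin 4) K := X 0 * X 2 - X 1 * X 3 ^ (m + 1) with hg4def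
  set g5 : MvPolynomial (Fin 4) K := X 0 * X 3 - X 1 ^ m * X 2 with hg5def
  set T : Ideal (MvPolynomial (Fin 4) K) :=
    Ideal.span {f, g2, g3, g4, g5} + Ideal.span {X 3} with hTdef
  have memI : ∀ p ∈ ({f, g2, g3, g4, g5} : Set (MvPolynomial (Fin 4) K)), p ∈ T :=
    fun p hp => Submodule.mem_sup_left (Ideal.subset_span hp)
  have hs3 : (X 3 : MvPolynomial (Fin 4) K) ∈ T :=
    Submodule.mem_sup_right (Ideal.subset_span rfl)
  have hf : f ∈ T := memI f (by simp)
  have hz2 : (X 2 : MvPolynomial (Fin 4) K) * X 2 ∈ T := by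
    have h : (X 2 : MvPolynomial (Fin 4) K) * X 2 = g2 + (X 1 * X 3) * X 3 := by
      rw [hg2def]; ring
    exact h ▸ T.add_mem (memI g2 (by simp)) (T.mul_mem_left _ hs3)
  have hxz : (X 0 : MvPolynomial (Fin 4) K) * X 2 ∈ T := by
    have h : (X 0 : MvPolynomial (Fin 4) K) * X 2 = g4 + (X 1 * X 3 ^ m) * X 3 := by
      rw [hg4def]; ring
    exact h ▸ T.add_mem (memI g4 (by simp)) (T.mul_mem_left _ hs3)
  have hyz : (X 1 : MvPolynomial (Fin 4) K) ^ m * X 2 ∈ T := by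
    have h : (X 1 : MvPolynomial (Fin 4) K) ^ m * X 2 = X 0 * X 3 - g5 := by
      rw [hg5def]; ring
    exact h ▸ T.sub_mem (T.mul_mem_left _ hs3) (memI g5 (by simp))
  have hfz : f * X 2 ∈ T := by
    have h : f * X 2 = X 0 * (X 0 * X 2) - X 1 ^ (m + 1) * (X 1 ^ m * X 2) := by
      rw [hfdef]; ring
    exact h ▸ T.sub_mem (T.mul_mem_left _ hxz) (T.mul_mem_left _ hyz)
  exact key_aux (X 0) (X 1) (X 2) (X 3) f m T hf hs3 hz2 hxz hyz hfz
end

section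
/- Let K be a field, n ≥ 3 an odd integer, and in K[x,y,z,s] let I_n be the ideal generated by x² − y^n, z² − y s², z^n − x s^n, x z − y s^{(n+1)/2}, x s − y^{(n−1)/2} z, and let J_n = (x² − y^n, z, s). Then I_n + (s) ⊆ J_n and the quotient J_n / (I_n + (s)) is a K-vector space of dimension (n−1)/2, with basis given by the images of z, yz, …, y^{(n−3)/2} z. -/
open MvPolynomial Finsupp

namespace JnAux

variable {K : Type*} [Field K]

lemma hmono (m d : Fin 4 →₀ ℕ) (a : K) (j : Fin 4) (h : d j ≠ m j) :
    coeff m (monomial d a) = 0 := by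
  rw [coeff_monomial, if_neg fun hd => h (by rw [hd])]

lemma xpxp (i j : Fin 4) (a b : ℕ) :
    (X i ^ a * X j ^ b : MvPolynomial (Fin 4) K)
      = monomial (single i a + single j b) 1 := by
  rw [X_pow_eq_monomial, X_pow_eq_monomial, monomial_mul, one_mul]

lemma xxp (i j : Fin 4) (b : ℕ) :
    (X i * X j ^ b : MvPolynomial (Fin 4) K)
      = monomial (single i 1 + single j b) 1 := by
  rw [← pow_one (X i), xpxp]

lemma xpx (i j : Fin 4) (a : ℕ) :
    (X i ^ a * X j : MvPolynomial (Fin 4) K)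
      = monomial (single i a + single j 1) 1 := by
  rw [← pow_one (X j), xpxp]

lemma xx (i j : Fin 4) :
    (X i * X j : MvPolynomial (Fin 4) K)
      = monomial (single i 1 + single j 1) 1 := by
  rw [← pow_one (X i), xpx]

lemma xone (i : Fin 4) : (X i : MvPolynomial (Fin 4) K) = monomial (single i 1) 1 := rfl

def T (K : Type*) [Field K] (n : ℕ) : Set (MvPolynomial (Fin 4) K) :=
  {X 0 ^ 2 - X 1 ^ n, X 2 ^ 2 - X 1 * X 3 ^ 2,
   X 2 ^ n - X 0 * X 3 ^ n, X 0 * X 2 - X 1 * X 3 ^ ((n + 1) / 2),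
   X 0 * X 3 - X 1 ^ ((n - 1) / 2) * X 2} ∪ {X 3}

lemma coeff_vanish (n : ℕ) (hn3 : 3 ≤ n) {p : MvPolynomial (Fin 4) K}
    (hp : p ∈ Ideal.span (T K n)) :
    ∀ m : Fin 4 →₀ ℕ, m 0 = 0 → m 3 = 0 → m 2 ≤ 1 → m 1 < (n - 1) / 2 →
      coeff m p = 0 := by
  refine Submodule.span_induction
    (p := fun q _ => ∀ m : Fin 4 →₀ ℕ, m 0 = 0 → m 3 = 0 → m 2 ≤ 1 →
      m 1 < (n - 1) / 2 → coeff m q = 0) ?_ ?_ ?_ ?_ hp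
  · intro g hg m h0 h3 h2 h1
    simp only [T, Set.mem_union, Set.mem_insert_iff, Set.mem_singleton_iff] at hg
    rcases hg with ((rfl | rfl | rfl | rfl | rfl) | rfl)
    · rw [coeff_sub, X_pow_eq_monomial, X_pow_eq_monomial,
        hmono m _ _ 0 (by simp [Finsupp.single_apply, h0] <;> omega),
        hmono m _ _ 1 (by simp [Finsupp.single_apply, h1] <;> omega), sub_zero]
    · rw [coeff_sub, X_pow_eq_monomial, xxp,
        hmono m _ _ 2 (by simp [Finsupp.single_apply] <;> omega),
        hmono m _ _ 3 (by simp [Finsupp.single_apply, h3] <;> omega), sub_zero]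
    · rw [coeff_sub, X_pow_eq_monomial, xxp,
        hmono m _ _ 2 (by simp [Finsupp.single_apply] <;> omega),
        hmono m _ _ 0 (by simp [Finsupp.single_apply, h0] <;> omega), sub_zero]
    · rw [coeff_sub, xx, xxp,
        hmono m _ _ 0 (by simp [Finsupp.single_apply, h0] <;> omega),
        hmono m _ _ 3 (by simp [Finsupp.single_apply, h3] <;> omega), sub_zero]
    · rw [coeff_sub, xx, xpx,
        hmono m _ _ 0 (by simp [Finsupp.single_apply, h0] <;> omega),
        hmono m _ _ 1 (by simp [Finsupp.single_apply] <;> omega), sub_zero]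
    · rw [xone, hmono m _ _ 3 (by simp [Finsupp.single_apply, h3] <;> omega)]
  · intro m _ _ _ _; simp
  · intro x y _ _ hx hy m h0 h3 h2 h1
    rw [coeff_add, hx m h0 h3 h2 h1, hy m h0 h3 h2 h1, add_zero]
  · intro a x _ hx m h0 h3 h2 h1
    rw [smul_eq_mul, coeff_mul]
    refine Finset.sum_eq_zero fun q hq => ?_
    rw [Finset.HasAntidiagonal.mem_antidiagonal] at hq
    have hle : ∀ i, q.2 i ≤ m i := fun i => by
      rw [← hq]; simp [Finsupp.add_apply]
    rw [hx q.2 (by have := hle 0; omega) (by have := hle 3; omega)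
      (by have := hle 2; omega) (by have := hle 1; omega), mul_zero]

end JnAux

open JnAux in
set_option synthInstance.maxHeartbeats 1000000 in
set_option maxHeartbeats 2000000 in
/-- In `K[x,y,z,s]` (with `x = X 0`, `y = X 1`, `z = X 2`, `s = X 3`), for odd
`n ≥ 3`, with `Iₙ = (x²−yⁿ, z²−ys², zⁿ−xsⁿ, xz−ys^((n+1)/2), xs−y^((n−1)/2)z)`
and `Jₙ = (x²−yⁿ, z, s)`: one has `Iₙ + (s) ⊆ Jₙ`, and the quotient
`Jₙ/(Iₙ+(s))` is a `K`-vector space of dimension `(n−1)/2` with basis the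
images of `z, yz, …, y^((n−3)/2)z`. -/
theorem Jn_quotient_basis {K : Type*} [Field K] (n : ℕ) (hn3 : 3 ≤ n)
    (hodd : Odd n)
    (Iₙ : Ideal (MvPolynomial (Fin 4) K))
    (hIₙ : Iₙ = Ideal.span {X 0 ^ 2 - X 1 ^ n, X 2 ^ 2 - X 1 * X 3 ^ 2,
        X 2 ^ n - X 0 * X 3 ^ n, X 0 * X 2 - X 1 * X 3 ^ ((n + 1) / 2),
        X 0 * X 3 - X 1 ^ ((n - 1) / 2) * X 2})
    (Jₙ : Ideal (MvPolynomial (Fin 4) K))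
    (hJₙ : Jₙ = Ideal.span {X 0 ^ 2 - X 1 ^ n, X 2, X 3}) :
    Iₙ + Ideal.span {X 3} ≤ Jₙ ∧
    LinearIndependent K (fun k : Fin ((n - 1) / 2) =>
      Ideal.Quotient.mk (Iₙ + Ideal.span {X 3}) (X 1 ^ (k : ℕ) * X 2)) ∧
    Submodule.span K (Set.range fun k : Fin ((n - 1) / 2) =>
        Ideal.Quotient.mk (Iₙ + Ideal.span {X 3}) (X 1 ^ (k : ℕ) * X 2)) =
      Submodule.restrictScalars K
        (Jₙ.map (Ideal.Quotient.mk (Iₙ + Ideal.span {X 3}))) := by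
  have hAT : Iₙ + Ideal.span {X 3} = Ideal.span (T K n) := by
    have hTset : T K n = ({X 0 ^ 2 - X 1 ^ n, X 2 ^ 2 - X 1 * X 3 ^ 2,
        X 2 ^ n - X 0 * X 3 ^ n, X 0 * X 2 - X 1 * X 3 ^ ((n + 1) / 2),
        X 0 * X 3 - X 1 ^ ((n - 1) / 2) * X 2} : Set (MvPolynomial (Fin 4) K)) ∪ {X 3} := rfl
    rw [hTset, Ideal.span_union, hIₙ, Submodule.add_eq_sup]
  set A := Iₙ + Ideal.span {X 3} with hA
  -- basic memberships in A
  have hs : (X 3 : MvPolynomial (Fin 4) K) ∈ A := by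
    rw [hAT]; exact Ideal.subset_span (by simp [T])
  have hg2 : (X 2 ^ 2 - X 1 * X 3 ^ 2 : MvPolynomial (Fin 4) K) ∈ A := by
    rw [hAT]; exact Ideal.subset_span (by simp [T])
  have hg4 : (X 0 * X 2 - X 1 * X 3 ^ ((n + 1) / 2) : MvPolynomial (Fin 4) K) ∈ A := by
    rw [hAT]; exact Ideal.subset_span (by simp [T])
  have hg5 : (X 0 * X 3 - X 1 ^ ((n - 1) / 2) * X 2 : MvPolynomial (Fin 4) K) ∈ A := by
    rw [hAT]; exact Ideal.subset_span (by simp [T])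
  have hg1 : (X 0 ^ 2 - X 1 ^ n : MvPolynomial (Fin 4) K) ∈ A := by
    rw [hAT]; exact Ideal.subset_span (by simp [T])
  have hmulS : ∀ (r : MvPolynomial (Fin 4) K) (b : ℕ), 1 ≤ b → r * X 3 ^ b ∈ A := by
    intro r b hb
    have hb' : b = b - 1 + 1 := by omega
    rw [hb', pow_succ, ← mul_assoc]
    exact Ideal.mul_mem_left _ _ hs
  have hxz : (X 0 * X 2 : MvPolynomial (Fin 4) K) ∈ A := by
    have h : (X 0 * X 2 : MvPolynomial (Fin 4) K)
        = (X 0 * X 2 - X 1 * X 3 ^ ((n + 1) / 2)) + X 1 * X 3 ^ ((n + 1) / 2) := by ring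
    rw [h]; exact add_mem hg4 (hmulS _ _ (by omega))
  have hz2 : (X 2 ^ 2 : MvPolynomial (Fin 4) K) ∈ A := by
    have h : (X 2 ^ 2 : MvPolynomial (Fin 4) K)
        = (X 2 ^ 2 - X 1 * X 3 ^ 2) + X 1 * X 3 ^ 2 := by ring
    rw [h]; exact add_mem hg2 (hmulS _ _ (by omega))
  have hyz : (X 1 ^ ((n - 1) / 2) * X 2 : MvPolynomial (Fin 4) K) ∈ A := by
    have h : (X 1 ^ ((n - 1) / 2) * X 2 : MvPolynomial (Fin 4) K)
        = X 0 * X 3 - (X 0 * X 3 - X 1 ^ ((n - 1) / 2) * X 2) := by ring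
    rw [h]; exact sub_mem (Ideal.mul_mem_left _ _ hs) hg5
  -- Part 1 : A ≤ Jₙ
  have part1 : A ≤ Jₙ := by
    rw [hAT, hJₙ, Ideal.span_le]
    have hzJ : (X 2 : MvPolynomial (Fin 4) K) ∈
        Ideal.span ({X 0 ^ 2 - X 1 ^ n, X 2, X 3} : Set (MvPolynomial (Fin 4) K)) :=
      Ideal.subset_span (by simp)
    have hsJ : (X 3 : MvPolynomial (Fin 4) K) ∈
        Ideal.span ({X 0 ^ 2 - X 1 ^ n, X 2, X 3} : Set (MvPolynomial (Fin 4) K)) :=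
      Ideal.subset_span (by simp)
    have hgJ : (X 0 ^ 2 - X 1 ^ n : MvPolynomial (Fin 4) K) ∈
        Ideal.span ({X 0 ^ 2 - X 1 ^ n, X 2, X 3} : Set (MvPolynomial (Fin 4) K)) :=
      Ideal.subset_span (by simp)
    intro g hg
    simp only [T, Set.mem_union, Set.mem_insert_iff, Set.mem_singleton_iff] at hg
    rcases hg with ((rfl | rfl | rfl | rfl | rfl) | rfl)
    · exact hgJ
    · refine sub_mem ?_ ?_
      · rw [pow_two (X (2 : Fin 4) : MvPolynomial (Fin 4) K)]
        exact Ideal.mul_mem_left _ _ hzJ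
      · rw [show (X 1 * X 3 ^ 2 : MvPolynomial (Fin 4) K) = (X 1 * X 3) * X 3 by ring]
        exact Ideal.mul_mem_left _ _ hsJ
    · refine sub_mem ?_ ?_
      · rw [show (X 2 ^ n : MvPolynomial (Fin 4) K) = X 2 ^ (n - 1) * X 2 by
          rw [← pow_succ]; congr 1; omega]
        exact Ideal.mul_mem_left _ _ hzJ
      · rw [show (X 0 * X 3 ^ n : MvPolynomial (Fin 4) K) = (X 0 * X 3 ^ (n - 1)) * X 3 by
          rw [mul_assoc, ← pow_succ]; congr 2; omega]
        exact Ideal.mul_mem_left _ _ hsJ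
    · refine sub_mem (Ideal.mul_mem_left _ _ hzJ) ?_
      rw [show (X 1 * X 3 ^ ((n + 1) / 2) : MvPolynomial (Fin 4) K)
          = (X 1 * X 3 ^ ((n + 1) / 2 - 1)) * X 3 by
        rw [mul_assoc, ← pow_succ]; congr 2; omega]
      exact Ideal.mul_mem_left _ _ hsJ
    · exact sub_mem (Ideal.mul_mem_left _ _ hsJ) (Ideal.mul_mem_left _ _ hzJ)
    · exact hsJ
  -- the span of the images
  set v : Fin ((n - 1) / 2) → MvPolynomial (Fin 4) K ⧸ A :=
    fun k => Ideal.Quotient.mk A (X 1 ^ (k : ℕ) * X 2) with hv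
  set M : Submodule K (MvPolynomial (Fin 4) K ⧸ A) := Submodule.span K (Set.range v) with hM
  have hnpos : 0 < (n - 1) / 2 := by omega
  -- closure of M under multiplication by variables
  have hXclose : ∀ (i : Fin 4) (q : MvPolynomial (Fin 4) K ⧸ A),
      q ∈ M → (Ideal.Quotient.mk A (X i)) * q ∈ M := by
    intro i q hq
    refine Submodule.span_induction
      (p := fun q _ => (Ideal.Quotient.mk A (X i)) * q ∈ M) ?_ ?_ ?_ ?_ hq
    · rintro w ⟨k, rfl⟩
      rw [hv, ← map_mul]
      have hzero : ∀ w : MvPolynomial (Fin 4) K, w ∈ A → Ideal.Quotient.mk A w ∈ M := by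
        intro w hw
        rw [Ideal.Quotient.eq_zero_iff_mem.mpr hw]; exact zero_mem M
      fin_cases i
      · refine hzero _ ?_
        show (X 0 * (X 1 ^ (k : ℕ) * X 2) : MvPolynomial (Fin 4) K) ∈ A
        rw [show (X 0 * (X 1 ^ (k : ℕ) * X 2) : MvPolynomial (Fin 4) K)
            = X 1 ^ (k : ℕ) * (X 0 * X 2) by ring]
        exact Ideal.mul_mem_left _ _ hxz
      · show Ideal.Quotient.mk A (X 1 * (X 1 ^ (k : ℕ) * X 2)) ∈ M
        by_cases hk : (k : ℕ) + 1 < (n - 1) / 2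
        · have h : (X 1 * (X 1 ^ (k : ℕ) * X 2) : MvPolynomial (Fin 4) K)
              = X 1 ^ ((⟨(k : ℕ) + 1, hk⟩ : Fin ((n - 1) / 2)) : ℕ) * X 2 := by
            show (X 1 * (X 1 ^ (k : ℕ) * X 2) : MvPolynomial (Fin 4) K)
              = X 1 ^ ((k : ℕ) + 1) * X 2
            ring
          rw [h]
          exact Submodule.subset_span ⟨⟨(k : ℕ) + 1, hk⟩, rfl⟩
        · have hk2 : (k : ℕ) + 1 = (n - 1) / 2 := by have := k.isLt; omega
          have h : (X 1 * (X 1 ^ (k : ℕ) * X 2) : MvPolynomial (Fin 4) K)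
              = X 1 ^ ((k : ℕ) + 1) * X 2 := by ring
          rw [hk2] at h
          rw [h]
          exact hzero _ hyz
      · refine hzero _ ?_
        show (X 2 * (X 1 ^ (k : ℕ) * X 2) : MvPolynomial (Fin 4) K) ∈ A
        rw [show (X 2 * (X 1 ^ (k : ℕ) * X 2) : MvPolynomial (Fin 4) K)
            = X 1 ^ (k : ℕ) * X 2 ^ 2 by ring]
        exact Ideal.mul_mem_left _ _ hz2
      · refine hzero _ ?_
        show (X 3 * (X 1 ^ (k : ℕ) * X 2) : MvPolynomial (Fin 4) K) ∈ A
        rw [show (X 3 * (X 1 ^ (k : ℕ) * X 2) : MvPolynomial (Fin 4) K)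
            = (X 1 ^ (k : ℕ) * X 2) * X 3 by ring]
        exact Ideal.mul_mem_left _ _ hs
    · show Ideal.Quotient.mk A (X i) * 0 ∈ M
      rw [mul_zero]; exact zero_mem M
    · intro x y _ _ hx hy
      show Ideal.Quotient.mk A (X i) * (x + y) ∈ M
      rw [mul_add]; exact add_mem hx hy
    · intro a x _ hx
      show Ideal.Quotient.mk A (X i) * (a • x) ∈ M
      rw [mul_smul_comm]
      exact Submodule.smul_mem M a (by exact hx)
  have hmulclose : ∀ (r : MvPolynomial (Fin 4) K) (q : MvPolynomial (Fin 4) K ⧸ A),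
      q ∈ M → (Ideal.Quotient.mk A r) * q ∈ M := by
    intro r
    induction r using MvPolynomial.induction_on with
    | C a =>
      intro q hq
      obtain ⟨x, rfl⟩ := Ideal.Quotient.mk_surjective q
      have h : (Ideal.Quotient.mk A) (C a) * (Ideal.Quotient.mk A) x
          = a • (Ideal.Quotient.mk A) x := by
        rw [← map_mul, ← MvPolynomial.smul_eq_C_mul, ← Ideal.Quotient.mkₐ_eq_mk K A,
          map_smul]
      rw [h]; exact Submodule.smul_mem M a hq
    | add p q hp hq =>
      intro w hw; rw [map_add, add_mul]; exact add_mem (hp w hw) (hq w hw)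
    | mul_X p i hp =>
      intro w hw; rw [map_mul, mul_assoc]
      exact hp _ (hXclose i w hw)
  -- every element of Jₙ maps into M
  have hJle : ∀ p ∈ Jₙ, Ideal.Quotient.mk A p ∈ M := by
    rw [hJₙ]
    intro p hp
    refine Submodule.span_induction
      (p := fun q _ => Ideal.Quotient.mk A q ∈ M) ?_ ?_ ?_ ?_ hp
    · intro g hg
      simp only [Set.mem_insert_iff, Set.mem_singleton_iff] at hg
      rcases hg with rfl | rfl | rfl
      · rw [Ideal.Quotient.eq_zero_iff_mem.mpr hg1]; exact zero_mem M
      · have : (X 2 : MvPolynomial (Fin 4) K)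
            = X 1 ^ ((⟨0, hnpos⟩ : Fin ((n - 1) / 2)) : ℕ) * X 2 := by simp
        rw [this]
        exact Submodule.subset_span ⟨⟨0, hnpos⟩, rfl⟩
      · rw [Ideal.Quotient.eq_zero_iff_mem.mpr hs]; exact zero_mem M
    · show Ideal.Quotient.mk A 0 ∈ M
      rw [map_zero]; exact zero_mem M
    · intro x y _ _ hx hy
      show Ideal.Quotient.mk A (x + y) ∈ M
      rw [map_add]; exact add_mem hx hy
    · intro a x _ hx
      show Ideal.Quotient.mk A (a • x) ∈ M
      rw [smul_eq_mul, map_mul]; exact hmulclose a _ hx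
  refine ⟨part1, ?_, ?_⟩
  · -- linear independence
    rw [Fintype.linearIndependent_iff]
    intro c hc j
    have hc' : Ideal.Quotient.mk A (∑ k, c k • (X 1 ^ (k : ℕ) * X 2)) = 0 := by
      rw [← Ideal.Quotient.mkₐ_eq_mk K A, map_sum]
      simp only [map_smul, Ideal.Quotient.mkₐ_eq_mk]
      exact hc
    have hmem : (∑ k, c k • (X 1 ^ (k : ℕ) * X 2) : MvPolynomial (Fin 4) K) ∈
        Ideal.span (T K n) := by
      rw [← hAT]; exact Ideal.Quotient.eq_zero_iff_mem.mp hc'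
    have hco := coeff_vanish n hn3 hmem (single 1 (j : ℕ) + single 2 1)
      (by simp [Finsupp.single_apply])
      (by simp [Finsupp.single_apply])
      (by simp [Finsupp.single_apply])
      (by simpa [Finsupp.single_apply] using j.isLt)
    rw [MvPolynomial.coeff_sum] at hco
    have heach : ∀ k : Fin ((n - 1) / 2),
        coeff (single 1 (j : ℕ) + single 2 1)
            (c k • (X 1 ^ (k : ℕ) * X 2) : MvPolynomial (Fin 4) K)
          = if k = j then c k else 0 := by
      intro k
      have h1 : (X 1 ^ (k : ℕ) * X 2 : MvPolynomial (Fin 4) K)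
          = monomial (single 1 (k : ℕ) + single 2 1) 1 := xpx 1 2 _
      rw [coeff_smul, h1, coeff_monomial]
      by_cases hkj : k = j
      · subst hkj; rw [if_pos rfl, if_pos rfl, smul_eq_mul, mul_one]
      · rw [if_neg hkj, if_neg, smul_zero]
        intro h
        apply hkj
        have := DFunLike.congr_fun h 1
        simp [Finsupp.single_apply] at this
        exact Fin.ext this
    rw [Finset.sum_congr rfl fun k _ => heach k, Finset.sum_ite_eq' Finset.univ j
      (fun k => c k)] at hco
    simpa using hco
  · -- span equality
    apply le_antisymm
    · rw [Submodule.span_le]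
      rintro _ ⟨k, rfl⟩
      rw [SetLike.mem_coe, Submodule.restrictScalars_mem]
      refine Ideal.mem_map_of_mem _ ?_
      rw [hJₙ]
      exact Ideal.mul_mem_left _ _ (Ideal.subset_span (by simp))
    · intro q hq
      rw [Submodule.restrictScalars_mem] at hq
      obtain ⟨p, hpJ, rfl⟩ :=
        (Ideal.mem_map_iff_of_surjective _ Ideal.Quotient.mk_surjective).mp hq
      exact hJle p hpJ
end
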